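/- arXiv:2411.03828 — 14 statements merged into one kernel-verified Lean document; each statement's English description precedes it below -/
import Mathlib

section
/- Let β > 0 and let F be a function on an interval I ⊆ ℝ with 0 ≤ F(x) ≤ 1, and define G_{β,1}(x) = β F(x)/(1 + (β − 1) F(x)). If F is concave on I and β ≥ 1, then G_{β,1} is concave on I. If F is convex on I and 0 < β ≤ 1, then G_{β,1} is convex on I. -/
/-- For `β > 0` and `F` with values in `[0,1]` on `I`, let
`G_{β,1}(x) = β F(x) / (1 + (β-1) F(x))`.  If `F` is concave on `I` and `β ≥ 1`
then `G_{β,1}` is concave on `I`; if `F` is convex on `I` and `β ≤ 1` then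
`G_{β,1}` is convex on `I`. -/
theorem oMO_convexity_theta_one
    (β : ℝ) (hβ : 0 < β) (I : Set ℝ) (F : ℝ → ℝ)
    (hF : ∀ x ∈ I, 0 ≤ F x ∧ F x ≤ 1) :
    (ConcaveOn ℝ I F → 1 ≤ β →
      ConcaveOn ℝ I (fun x => β * F x / (1 + (β - 1) * F x))) ∧
    (ConvexOn ℝ I F → β ≤ 1 →
      ConvexOn ℝ I (fun x => β * F x / (1 + (β - 1) * F x))) := by
  have hD : ∀ w : ℝ, 0 ≤ w → w ≤ 1 → 0 < 1 + (β - 1) * w := by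
    intro w h0 h1
    rcases eq_or_lt_of_le h1 with h | h
    · rw [h]; linarith
    · nlinarith [mul_nonneg hβ.le h0]
  constructor
  · intro hFc hβ1
    refine ⟨hFc.1, ?_⟩
    intro x hx y hy a b ha hb hab
    obtain ⟨hs0, hs1⟩ := hF x hx
    obtain ⟨ht0, ht1⟩ := hF y hy
    have hmem : a * x + b * y ∈ I := by simpa using hFc.1 hx hy ha hb hab
    obtain ⟨hu0, hu1⟩ := hF _ hmem
    have hconc : a * F x + b * F y ≤ F (a * x + b * y) := by
      simpa using hFc.2 hx hy ha hb hab
    simp only [smul_eq_mul]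
    have hb' : b = 1 - a := by linarith
    subst hb'
    set s := F x; set t := F y; set u := F (a * x + (1 - a) * y) with hu
    have hDs := hD s hs0 hs1
    have hDt := hD t ht0 ht1
    have hDu := hD u hu0 hu1
    have hDv := hD ((1 - a) * s + a * t) (by positivity) (by nlinarith)
    rw [← sub_nonneg]
    have key : β * u / (1 + (β - 1) * u)
        - (a * (β * s / (1 + (β - 1) * s)) + (1 - a) * (β * t / (1 + (β - 1) * t)))
        = (β * ((u - (a * s + (1 - a) * t)) * (1 + (β - 1) * ((1 - a) * s + a * t))
            + (β - 1) * (a * (1 - a)) * (s - t) ^ 2))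
          / ((1 + (β - 1) * u) * ((1 + (β - 1) * s) * (1 + (β - 1) * t))) := by
      rw [← mul_div_assoc, ← mul_div_assoc, div_add_div _ _ hDs.ne' hDt.ne', div_sub_div _ _ hDu.ne' (by positivity), div_eq_div_iff (by positivity) (by positivity)]
      ring
    rw [key]
    apply div_nonneg _ (by positivity)
    have h1 : 0 ≤ (u - (a * s + (1 - a) * t)) * (1 + (β - 1) * ((1 - a) * s + a * t)) :=
      mul_nonneg (by linarith) hDv.le
    have h2 : 0 ≤ (β - 1) * (a * (1 - a)) * (s - t) ^ 2 :=
      mul_nonneg (mul_nonneg (by linarith) (mul_nonneg ha (by linarith))) (sq_nonneg _)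
    positivity
  · intro hFc hβ1
    refine ⟨hFc.1, ?_⟩
    intro x hx y hy a b ha hb hab
    obtain ⟨hs0, hs1⟩ := hF x hx
    obtain ⟨ht0, ht1⟩ := hF y hy
    have hmem : a * x + b * y ∈ I := by simpa using hFc.1 hx hy ha hb hab
    obtain ⟨hu0, hu1⟩ := hF _ hmem
    have hconv : F (a * x + b * y) ≤ a * F x + b * F y := by
      simpa using hFc.2 hx hy ha hb hab
    simp only [smul_eq_mul]
    have hb' : b = 1 - a := by linarith
    subst hb'
    set s := F x; set t := F y; set u := F (a * x + (1 - a) * y) with hu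
    have hDs := hD s hs0 hs1
    have hDt := hD t ht0 ht1
    have hDu := hD u hu0 hu1
    have hDv := hD ((1 - a) * s + a * t) (by positivity) (by nlinarith)
    rw [← sub_nonneg]
    have key : a * (β * s / (1 + (β - 1) * s)) + (1 - a) * (β * t / (1 + (β - 1) * t))
        - β * u / (1 + (β - 1) * u)
        = (β * (((a * s + (1 - a) * t) - u) * (1 + (β - 1) * ((1 - a) * s + a * t))
            + (1 - β) * (a * (1 - a)) * (s - t) ^ 2))
          / ((1 + (β - 1) * u) * ((1 + (β - 1) * s) * (1 + (β - 1) * t))) := by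
      rw [← mul_div_assoc, ← mul_div_assoc, div_add_div _ _ hDs.ne' hDt.ne', div_sub_div _ _ (by positivity) hDu.ne', div_eq_div_iff (by positivity) (by positivity)]
      ring
    rw [key]
    apply div_nonneg _ (by positivity)
    have h1 : 0 ≤ ((a * s + (1 - a) * t) - u) * (1 + (β - 1) * ((1 - a) * s + a * t)) :=
      mul_nonneg (by linarith) hDv.le
    have h2 : 0 ≤ (1 - β) * (a * (1 - a)) * (s - t) ^ 2 :=
      mul_nonneg (mul_nonneg (by linarith) (mul_nonneg ha (by linarith))) (sq_nonneg _)
    positivity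
end

section
/- Let F : [0,∞) → [0,1) be a nondecreasing distribution function and let h_F : [0,∞) → [0,∞) be its hazard rate. The hazard rate of the oMO distribution G_{β,1} is h_{G_{β,1}}(x) = β h_F(x)/(1 + (β − 1) F(x)). If h_F is nondecreasing and 0 < β ≤ 1, then h_{G_{β,1}} is nondecreasing on [0,∞) (G_{β,1} ∈ IHR). If h_F is nonincreasing and β ≥ 1, then h_{G_{β,1}} is nonincreasing on [0,∞) (G_{β,1} ∈ DHR). -/
/-- If `F` is a nondecreasing distribution function on `[0,∞)`
with hazard rate `h_F`, then the hazard rate of the oMO distribution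
`G_{β,1}`, namely `x ↦ β h_F(x) / (1 + (β-1) F(x))`, is nondecreasing whenever
`h_F` is nondecreasing and `0 < β ≤ 1`, and nonincreasing whenever `h_F` is
nonincreasing and `β ≥ 1`. -/
theorem oMO_hazard_monotonicity_theta_one
    (β : ℝ) (hβ : 0 < β) (F hF : ℝ → ℝ)
    (hFmono : MonotoneOn F (Set.Ici 0))
    (hFrange : ∀ x ∈ Set.Ici (0 : ℝ), 0 ≤ F x ∧ F x < 1)
    (hhF : ∀ x ∈ Set.Ici (0 : ℝ), 0 ≤ hF x) :
    (MonotoneOn hF (Set.Ici 0) → β ≤ 1 →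
      MonotoneOn (fun x => β * hF x / (1 + (β - 1) * F x)) (Set.Ici 0)) ∧
    (AntitoneOn hF (Set.Ici 0) → 1 ≤ β →
      AntitoneOn (fun x => β * hF x / (1 + (β - 1) * F x)) (Set.Ici 0)) := by
  have hD : ∀ x ∈ Set.Ici (0 : ℝ), 0 < 1 + (β - 1) * F x := by
    intro x hx
    obtain ⟨h0, h1⟩ := hFrange x hx
    rcases le_or_gt β 1 with hb | hb
    · nlinarith
    · nlinarith
  constructor
  · intro hmono hb1 x hx y hy hxy
    have hDx := hD x hx
    have hDy := hD y hy
    have hFle := hFmono hx hy hxy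
    have hhx := hhF x hx
    have hle := hmono hx hy hxy
    simp only
    rw [div_le_div_iff₀ hDx hDy]
    nlinarith [mul_nonneg (sub_nonneg.2 hle) hDx.le,
      mul_nonneg hhx (mul_nonneg (sub_nonneg.2 hFle) (sub_nonneg.2 hb1)),
      mul_pos hβ hDx]
  · intro hanti hb1 x hx y hy hxy
    have hDx := hD x hx
    have hDy := hD y hy
    have hFle := hFmono hx hy hxy
    have hhy := hhF y hy
    have hle := hanti hx hy hxy
    simp only
    rw [div_le_div_iff₀ hDy hDx]
    nlinarith [mul_nonneg (sub_nonneg.2 hle) hDy.le,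
      mul_nonneg hhy (mul_nonneg (sub_nonneg.2 hFle) (sub_nonneg.2 hb1)),
      mul_pos hβ hDy]
end

section
/- Let F : ℝ → [0,1] be a nondecreasing distribution function with density f ≥ 0, let β > 0, and let g_{β,1}(x) = β f(x)/(1 + (β − 1)F(x))² be the density of the oMO distribution G_{β,1}. If 0 < β ≤ 1, the density ratio g_{β,1}(x)/f(x) = β/(1 + (β − 1)F(x))² is nondecreasing in x, so F ≤_lr G_{β,1}. If β ≥ 1, this ratio is nonincreasing in x, so F ≥_lr G_{β,1}. -/
/-- For a nondecreasing distribution function `F` with density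
`f ≥ 0` and `β > 0`, the likelihood ratio of the oMO distribution `G_{β,1}`
to `F`, namely `g_{β,1}(x)/f(x) = β / (1 + (β-1) F(x))²`, is nondecreasing if
`0 < β ≤ 1` (so `F ≤_lr G_{β,1}`) and nonincreasing if `β ≥ 1`
(so `F ≥_lr G_{β,1}`). -/
theorem oMO_likelihood_ratio_theta_one
    (F f : ℝ → ℝ) (hFmono : Monotone F)
    (hFrange : ∀ x, 0 ≤ F x ∧ F x ≤ 1) (hf : ∀ x, 0 ≤ f x)
    (β : ℝ) (hβ : 0 < β) :
    (β ≤ 1 → Monotone (fun x => β / (1 + (β - 1) * F x) ^ 2)) ∧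
    (1 ≤ β → Antitone (fun x => β / (1 + (β - 1) * F x) ^ 2)) := by
  constructor
  · intro hβ1 x y hxy
    have hpos : ∀ z, 0 < 1 + (β - 1) * F z := by
      intro z
      have h1 : (β - 1) * 1 ≤ (β - 1) * F z :=
        mul_le_mul_of_nonpos_left (hFrange z).2 (by linarith)
      nlinarith
    have hle : 1 + (β - 1) * F y ≤ 1 + (β - 1) * F x := by
      have := mul_le_mul_of_nonpos_left (hFmono hxy) (show β - 1 ≤ 0 by linarith)
      linarith
    have hsq : (1 + (β - 1) * F y) ^ 2 ≤ (1 + (β - 1) * F x) ^ 2 :=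
      pow_le_pow_left₀ (le_of_lt (hpos y)) hle 2
    exact div_le_div_of_nonneg_left hβ.le (pow_pos (hpos y) 2) hsq
  · intro hβ1 x y hxy
    have hpos : ∀ z, 0 < 1 + (β - 1) * F z := by
      intro z
      have h1 : 0 ≤ (β - 1) * F z := mul_nonneg (by linarith) (hFrange z).1
      linarith
    have hle : 1 + (β - 1) * F x ≤ 1 + (β - 1) * F y := by
      have := mul_le_mul_of_nonneg_left (hFmono hxy) (show 0 ≤ β - 1 by linarith)
      linarith
    have hsq : (1 + (β - 1) * F x) ^ 2 ≤ (1 + (β - 1) * F y) ^ 2 :=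
      pow_le_pow_left₀ (le_of_lt (hpos x)) hle 2
    exact div_le_div_of_nonneg_left hβ.le (pow_pos (hpos x) 2) hsq
end

section
/- Let F : ℝ → [0,1) be a distribution function with density f ≥ 0 and 0 < F(x) < 1 on the region considered, let β > 0, and let G_{β,1}(x) = βF(x)/(1 + (β − 1)F(x)) with survival Ḡ_{β,1}(x) = (1 − F(x))/(1 + (β − 1)F(x)) and density g_{β,1}(x) = βf(x)/(1 + (β − 1)F(x))². If 0 < β ≤ 1, then for every x: β·f(x)/(1 − F(x)) ≤ g_{β,1}(x)/Ḡ_{β,1}(x) ≤ f(x)/(1 − F(x)), g_{β,1}(x)/G_{β,1}(x) ≥ f(x)/F(x), and Ḡ_{β,1}(x) ≥ 1 − F(x). If β ≥ 1, then for every x: f(x)/(1 − F(x)) ≤ g_{β,1}(x)/Ḡ_{β,1}(x) ≤ β·f(x)/(1 − F(x)), g_{β,1}(x)/G_{β,1}(x) ≤ f(x)/F(x), and Ḡ_{β,1}(x) ≤ 1 − F(x). -/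
/-- Hazard rate, reversed hazard rate and survival comparisons
between a baseline `F` (density `f`, `0 < F < 1`) and the oMO distribution
`G_{β,1}(x) = βF(x)/(1+(β-1)F(x))`, with survival
`Ḡ(x) = (1-F(x))/(1+(β-1)F(x))` and density `g(x) = βf(x)/(1+(β-1)F(x))²`. -/
theorem oMO_hazard_bounds_theta_one
    (F f : ℝ → ℝ) (hFrange : ∀ x, 0 < F x ∧ F x < 1)
    (hf : ∀ x, 0 ≤ f x) (β : ℝ) (hβ : 0 < β) :
    (β ≤ 1 → ∀ x,
      β * (f x / (1 - F x)) ≤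
        (β * f x / (1 + (β - 1) * F x) ^ 2) /
          ((1 - F x) / (1 + (β - 1) * F x)) ∧
      (β * f x / (1 + (β - 1) * F x) ^ 2) /
          ((1 - F x) / (1 + (β - 1) * F x)) ≤ f x / (1 - F x) ∧
      f x / F x ≤
        (β * f x / (1 + (β - 1) * F x) ^ 2) /
          (β * F x / (1 + (β - 1) * F x)) ∧
      1 - F x ≤ (1 - F x) / (1 + (β - 1) * F x)) ∧
    (1 ≤ β → ∀ x,
      f x / (1 - F x) ≤
        (β * f x / (1 + (β - 1) * F x) ^ 2) /
          ((1 - F x) / (1 + (β - 1) * F x)) ∧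
      (β * f x / (1 + (β - 1) * F x) ^ 2) /
          ((1 - F x) / (1 + (β - 1) * F x)) ≤ β * (f x / (1 - F x)) ∧
      (β * f x / (1 + (β - 1) * F x) ^ 2) /
          (β * F x / (1 + (β - 1) * F x)) ≤ f x / F x ∧
      (1 - F x) / (1 + (β - 1) * F x) ≤ 1 - F x) := by
  have key : ∀ x, 0 < 1 + (β - 1) * F x := by
    intro x
    obtain ⟨h0, h1⟩ := hFrange x
    nlinarith
  have hs1 : ∀ x, (β * f x / (1 + (β - 1) * F x) ^ 2) /
      ((1 - F x) / (1 + (β - 1) * F x)) =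
      β * f x / ((1 + (β - 1) * F x) * (1 - F x)) := by
    intro x
    obtain ⟨h0, h1⟩ := hFrange x
    have hD := key x
    have h1F : (0:ℝ) < 1 - F x := by linarith
    field_simp
  have hs2 : ∀ x, (β * f x / (1 + (β - 1) * F x) ^ 2) /
      (β * F x / (1 + (β - 1) * F x)) =
      f x / ((1 + (β - 1) * F x) * F x) := by
    intro x
    obtain ⟨h0, h1⟩ := hFrange x
    have hD := key x
    field_simp
  constructor
  · intro hβ1 x
    obtain ⟨h0, h1⟩ := hFrange x
    have hfx := hf x
    have hD := key x
    have hD1 : 1 + (β - 1) * F x ≤ 1 := by nlinarith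
    have hDβ : β ≤ 1 + (β - 1) * F x := by nlinarith
    have h1F : (0:ℝ) < 1 - F x := by linarith
    refine ⟨?_, ?_, ?_, ?_⟩
    · rw [hs1, ← mul_div_assoc, div_le_div_iff₀ h1F (by positivity)]
      nlinarith [mul_nonneg (mul_nonneg (mul_nonneg hβ.le hfx) h1F.le)
        (mul_nonneg (by linarith : (0:ℝ) ≤ 1 - β) h0.le)]
    · rw [hs1, div_le_div_iff₀ (by positivity) h1F]
      nlinarith [mul_nonneg (mul_nonneg hfx h1F.le) (by linarith : (0:ℝ) ≤ 1 + (β - 1) * F x - β)]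
    · rw [hs2, div_le_div_iff₀ h0 (by positivity)]
      nlinarith [mul_nonneg (mul_nonneg hfx h0.le)
        (mul_nonneg (by linarith : (0:ℝ) ≤ 1 - β) h0.le)]
    · rw [le_div_iff₀ hD]; nlinarith
  · intro hβ1 x
    obtain ⟨h0, h1⟩ := hFrange x
    have hfx := hf x
    have hD := key x
    have hD1 : 1 ≤ 1 + (β - 1) * F x := by nlinarith
    have hDβ : 1 + (β - 1) * F x ≤ β := by nlinarith
    have h1F : (0:ℝ) < 1 - F x := by linarith
    refine ⟨?_, ?_, ?_, ?_⟩
    · rw [hs1, div_le_div_iff₀ h1F (by positivity)]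
      nlinarith [mul_nonneg (mul_nonneg hfx h1F.le) (by linarith : (0:ℝ) ≤ β - (1 + (β - 1) * F x))]
    · rw [hs1, ← mul_div_assoc, div_le_div_iff₀ (by positivity) h1F]
      nlinarith [mul_nonneg (mul_nonneg (mul_nonneg hβ.le hfx) h1F.le)
        (mul_nonneg (by linarith : (0:ℝ) ≤ β - 1) h0.le)]
    · rw [hs2, div_le_div_iff₀ (by positivity) h0]
      nlinarith [mul_nonneg (mul_nonneg hfx h0.le)
        (mul_nonneg (by linarith : (0:ℝ) ≤ β - 1) h0.le)]
    · rw [div_le_iff₀ hD]; nlinarith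
end

section
/- Let θ > 0 with θ ≠ 1 and β > 0, and let F : [0,∞) → [0,1) be a continuous, strictly increasing distribution function with F(0) = 0 and F(x) → 1 as x → ∞ (so F maps [0,∞) onto [0,1)). Define the oMO survival function Ḡ_{β,θ}(x) = (1 − F(x))^θ/(β F(x)^θ + (1 − F(x))^θ). Then F and G_{β,θ} are not comparable in the usual stochastic order: there exist x₁, x₂ > 0 such that Ḡ_{β,θ}(x₁) > 1 − F(x₁) and Ḡ_{β,θ}(x₂) < 1 − F(x₂). -/
open Real Filter

-- algebra: if β * (u/(1-u))^(θ-1) < 1 then survival of G exceeds survival of F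
lemma key_lt (θ β u : ℝ) (hβ : 0 < β) (hu0 : 0 < u) (hu1 : u < 1)
    (h : β * (u / (1 - u)) ^ (θ - 1) < 1) :
    1 - u < (1 - u) ^ θ / (β * u ^ θ + (1 - u) ^ θ) := by
  have h1u : (0:ℝ) < 1 - u := by linarith
  have hD : 0 < β * u ^ θ + (1 - u) ^ θ :=
    add_pos (mul_pos hβ (rpow_pos_of_pos hu0 θ)) (rpow_pos_of_pos h1u θ)
  rw [lt_div_iff₀ hD]
  have hdiv : (u / (1 - u)) ^ (θ - 1) = u ^ (θ - 1) / (1 - u) ^ (θ - 1) :=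
    div_rpow hu0.le h1u.le (θ - 1)
  have h2 : β * u ^ (θ - 1) < (1 - u) ^ (θ - 1) := by
    rw [hdiv, ← mul_div_assoc, div_lt_one (rpow_pos_of_pos h1u _)] at h
    linarith
  have h3 : β * u ^ (θ - 1) * (u * (1 - u)) < (1 - u) ^ (θ - 1) * (u * (1 - u)) :=
    mul_lt_mul_of_pos_right h2 (mul_pos hu0 h1u)
  have e1 : u ^ θ = u ^ (θ - 1) * u := by
    rw [← Real.rpow_add_one hu0.ne']; ring_nf
  have e2 : (1 - u) ^ θ = (1 - u) ^ (θ - 1) * (1 - u) := by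
    rw [← Real.rpow_add_one h1u.ne']; ring_nf
  rw [e1, e2]; nlinarith [h3]

lemma key_gt (θ β u : ℝ) (hβ : 0 < β) (hu0 : 0 < u) (hu1 : u < 1)
    (h : 1 < β * (u / (1 - u)) ^ (θ - 1)) :
    (1 - u) ^ θ / (β * u ^ θ + (1 - u) ^ θ) < 1 - u := by
  have h1u : (0:ℝ) < 1 - u := by linarith
  have hD : 0 < β * u ^ θ + (1 - u) ^ θ :=
    add_pos (mul_pos hβ (rpow_pos_of_pos hu0 θ)) (rpow_pos_of_pos h1u θ)
  rw [div_lt_iff₀ hD]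
  have hdiv : (u / (1 - u)) ^ (θ - 1) = u ^ (θ - 1) / (1 - u) ^ (θ - 1) :=
    div_rpow hu0.le h1u.le (θ - 1)
  have h2 : (1 - u) ^ (θ - 1) < β * u ^ (θ - 1) := by
    rw [hdiv, ← mul_div_assoc, lt_div_iff₀ (rpow_pos_of_pos h1u _)] at h
    linarith
  have h3 : (1 - u) ^ (θ - 1) * (u * (1 - u)) < β * u ^ (θ - 1) * (u * (1 - u)) :=
    mul_lt_mul_of_pos_right h2 (mul_pos hu0 h1u)
  have e1 : u ^ θ = u ^ (θ - 1) * u := by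
    rw [← Real.rpow_add_one hu0.ne']; ring_nf
  have e2 : (1 - u) ^ θ = (1 - u) ^ (θ - 1) * (1 - u) := by
    rw [← Real.rpow_add_one h1u.ne']; ring_nf
  rw [e1, e2]; nlinarith [h3]

-- value lemma: for u = exp s / (1 + exp s), β*(u/(1-u))^(θ-1) = exp (log β + s*(θ-1))
lemma val_lemma (θ β s : ℝ) (hβ : 0 < β) :
    let u := Real.exp s / (1 + Real.exp s)
    0 < u ∧ u < 1 ∧ β * (u / (1 - u)) ^ (θ - 1) = Real.exp (Real.log β + s * (θ - 1)) := by
  intro u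
  have ht : 0 < Real.exp s := Real.exp_pos s
  have hden : (0:ℝ) < 1 + Real.exp s := by linarith
  have hu0 : 0 < u := div_pos ht hden
  have hu1 : u < 1 := by
    rw [div_lt_one hden]; linarith
  refine ⟨hu0, hu1, ?_⟩
  have hq : u / (1 - u) = Real.exp s := by
    show (Real.exp s / (1 + Real.exp s)) / (1 - Real.exp s / (1 + Real.exp s)) = _
    field_simp
    ring
  rw [hq, Real.rpow_def_of_pos ht, Real.log_exp, Real.exp_add, Real.exp_log hβ]

lemma surj (F : ℝ → ℝ)
    (hcont : ContinuousOn F (Set.Ici 0))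
    (hF0 : F 0 = 0)
    (hlim : Tendsto F atTop (nhds 1))
    (u : ℝ) (hu0 : 0 < u) (hu1 : u < 1) : ∃ x > (0:ℝ), F x = u := by
  have hev : ∀ᶠ x in atTop, u < F x := hlim.eventually (lt_mem_nhds hu1)
  obtain ⟨b, hb0, hbu⟩ := ((eventually_ge_atTop (0:ℝ)).and hev).exists
  have hsub : Set.Icc (0:ℝ) b ⊆ Set.Ici 0 := Set.Icc_subset_Ici_self
  have := intermediate_value_Icc hb0 (hcont.mono hsub)
  have hu_mem : u ∈ Set.Icc (F 0) (F b) := ⟨by rw [hF0]; exact hu0.le, hbu.le⟩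
  obtain ⟨x, hx, hfx⟩ := this hu_mem
  refine ⟨x, ?_, hfx⟩
  rcases lt_or_eq_of_le hx.1 with h | h
  · exact h
  · exfalso; rw [← h, hF0] at hfx; linarith

/-- For `θ ≠ 1`, the baseline `F` and the oMO distribution
`G_{β,θ}` (with survival `Ḡ_{β,θ}(x) = (1-F(x))^θ/(βF(x)^θ+(1-F(x))^θ)`) are
not comparable in the usual stochastic order: the survival difference takes
both signs. -/
theorem oMO_noncomparable_usual_stochastic_order
    (θ β : ℝ) (hθ : 0 < θ) (hθ1 : θ ≠ 1) (hβ : 0 < β)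
    (F : ℝ → ℝ)
    (hcont : ContinuousOn F (Set.Ici 0))
    (hmono : StrictMonoOn F (Set.Ici 0))
    (hF0 : F 0 = 0)
    (hlim : Tendsto F atTop (nhds 1))
    (hrange : ∀ x ∈ Set.Ici (0 : ℝ), 0 ≤ F x ∧ F x < 1) :
    ∃ x₁ > (0 : ℝ), ∃ x₂ > (0 : ℝ),
      1 - F x₁ < (1 - F x₁) ^ θ / (β * F x₁ ^ θ + (1 - F x₁) ^ θ) ∧
      (1 - F x₂) ^ θ / (β * F x₂ ^ θ + (1 - F x₂) ^ θ) < 1 - F x₂ := by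
  have hθ1' : θ - 1 ≠ 0 := sub_ne_zero.mpr hθ1
  set s₁ := (-1 - Real.log β) / (θ - 1) with hs₁
  set s₂ := (1 - Real.log β) / (θ - 1) with hs₂
  obtain ⟨hu0₁, hu1₁, hval₁⟩ := val_lemma θ β s₁ hβ
  obtain ⟨hu0₂, hu1₂, hval₂⟩ := val_lemma θ β s₂ hβ
  set u₁ := Real.exp s₁ / (1 + Real.exp s₁)
  set u₂ := Real.exp s₂ / (1 + Real.exp s₂)
  have hc₁ : β * (u₁ / (1 - u₁)) ^ (θ - 1) < 1 := by
    rw [hval₁, hs₁, div_mul_cancel₀ _ hθ1']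
    calc Real.exp (Real.log β + (-1 - Real.log β)) = Real.exp (-1) := by ring_nf
    _ < 1 := Real.exp_lt_one_iff.mpr (by norm_num)
  have hc₂ : 1 < β * (u₂ / (1 - u₂)) ^ (θ - 1) := by
    rw [hval₂, hs₂, div_mul_cancel₀ _ hθ1']
    calc (1:ℝ) < Real.exp 1 := by
          have := Real.add_one_lt_exp (by norm_num : (1:ℝ) ≠ 0); linarith
    _ = Real.exp (Real.log β + (1 - Real.log β)) := by ring_nf
  obtain ⟨x₁, hx₁, hfx₁⟩ := surj F hcont hF0 hlim u₁ hu0₁ hu1₁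
  obtain ⟨x₂, hx₂, hfx₂⟩ := surj F hcont hF0 hlim u₂ hu0₂ hu1₂
  refine ⟨x₁, hx₁, x₂, hx₂, ?_, ?_⟩
  · rw [hfx₁]; exact key_lt θ β u₁ hβ hu0₁ hu1₁ hc₁
  · rw [hfx₂]; exact key_gt θ β u₂ hβ hu0₂ hu1₂ hc₂
end

section
/- Let α ≥ 0, β, θ > 0, p ∈ (0,1], and let F be a baseline distribution function with 0 ≤ F(x) < 1 and odds function Λ_F(x) = F(x)/(1 − F(x)). With Ḡ_{α,β,θ}(x) = 1/(1 + β((α + Λ_F(x))^θ − α^θ)) and G_{α,β,θ} = 1 − Ḡ_{α,β,θ}, the following geometric-stability identities hold for every x: ∑_{n=1}^∞ p(1 − p)^{n−1} (Ḡ_{α,β,θ}(x))ⁿ = Ḡ_{α,β/p,θ}(x) and ∑_{n=1}^∞ p(1 − p)^{n−1} (G_{α,β,θ}(x))ⁿ = G_{α,βp,θ}(x). (Probabilistically: the minimum, respectively maximum, of a Geometric(p) number of i.i.d. G_{α,β,θ}-distributed variables follows G_{α,β/p,θ}, respectively G_{α,βp,θ}.) -/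
open Real

/-- Geometric extreme stability of the d-oMO family.  With
`Ḡ_{α,β,θ}(x) = 1/(1 + β((α + Λ_F(x))^θ - α^θ))`, the geometric mixture of
powers of the survival function is the survival function with `β/p`, and the
geometric mixture of powers of the distribution function is the distribution
function with `βp`. -/
theorem doMO_geometric_extreme_stability
    (α β θ p : ℝ) (hα : 0 ≤ α) (hβ : 0 < β) (hθ : 0 < θ)
    (hp : p ∈ Set.Ioc (0 : ℝ) 1)
    (F : ℝ → ℝ) (hrange : ∀ x, 0 ≤ F x ∧ F x < 1) :
    ∀ x : ℝ,
      (∑' n : ℕ, p * (1 - p) ^ n *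
          (1 / (1 + β * ((α + F x / (1 - F x)) ^ θ - α ^ θ))) ^ (n + 1)) =
        1 / (1 + (β / p) * ((α + F x / (1 - F x)) ^ θ - α ^ θ)) ∧
      (∑' n : ℕ, p * (1 - p) ^ n *
          (1 - 1 / (1 + β * ((α + F x / (1 - F x)) ^ θ - α ^ θ))) ^ (n + 1)) =
        1 - 1 / (1 + (β * p) * ((α + F x / (1 - F x)) ^ θ - α ^ θ)) := by
  obtain ⟨hp0, hp1⟩ := hp
  intro x
  obtain ⟨hF0, hF1⟩ := hrange x
  set L : ℝ := F x / (1 - F x) with hLdef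
  have hL : 0 ≤ L := div_nonneg hF0 (by linarith)
  set A : ℝ := (α + L) ^ θ - α ^ θ with hAdef
  have hA : 0 ≤ A := by
    have := Real.rpow_le_rpow hα (by linarith : α ≤ α + L) hθ.le
    simpa [hAdef] using sub_nonneg.mpr this
  clear_value A
  have h1 : 0 < 1 + β * A := by nlinarith
  set G : ℝ := 1 / (1 + β * A) with hGdef
  have hG0 : 0 < G := by positivity
  have hG1 : G ≤ 1 := by
    rw [hGdef, div_le_one h1]; nlinarith
  constructor
  · -- survival part
    have hr0 : 0 ≤ (1 - p) * G := mul_nonneg (by linarith) hG0.le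
    have hr1 : (1 - p) * G < 1 := by nlinarith
    have hsum : ∑' n : ℕ, p * (1 - p) ^ n * G ^ (n + 1)
        = (p * G) * ∑' n : ℕ, ((1 - p) * G) ^ n := by
      rw [← tsum_mul_left]
      exact tsum_congr fun n => by rw [mul_pow]; ring
    rw [hsum, tsum_geometric_of_lt_one hr0 hr1]
    have hd : 1 - (1 - p) * G ≠ 0 := by nlinarith
    have h2 : 0 < 1 + (β / p) * A := by positivity
    rw [hGdef] at hd ⊢
    field_simp [h1.ne', hp0.ne', h2.ne']
    ring_nf
    rw [← add_mul, mul_inv_cancel₀ (by nlinarith [mul_nonneg hβ.le hA] : (0:ℝ) < p + β * A).ne']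
  · -- cdf part
    have hGc1 : 1 - G < 1 := by linarith
    have hGc0 : 0 ≤ 1 - G := by linarith
    have hr0 : 0 ≤ (1 - p) * (1 - G) := mul_nonneg (by linarith) hGc0
    have hr1 : (1 - p) * (1 - G) < 1 := by nlinarith
    have hsum : ∑' n : ℕ, p * (1 - p) ^ n * (1 - G) ^ (n + 1)
        = (p * (1 - G)) * ∑' n : ℕ, ((1 - p) * (1 - G)) ^ n := by
      rw [← tsum_mul_left]
      exact tsum_congr fun n => by rw [mul_pow]; ring
    rw [hsum, tsum_geometric_of_lt_one hr0 hr1]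
    have hd : 1 - (1 - p) * (1 - G) ≠ 0 := by nlinarith
    have h2 : 0 < 1 + (β * p) * A := by positivity
    rw [hGdef] at hd ⊢
    have key : 1 - (1 - p) * (1 - 1 / (1 + β * A)) = (1 + β * p * A) / (1 + β * A) := by
      field_simp
      ring
    rw [key]
    field_simp [h1.ne', h2.ne']
    ring
end

section
/- Let F be a baseline distribution with nonnegative nondecreasing odds function Λ_F and hazard rate h_F ≥ 0, and for α ≥ 0, β, θ > 0 let the hazard rate of the d-oMO distribution G_{α,β,θ} be h_{G_{α,β,θ}}(x) = βθ h_F(x) T_{α,β,θ}(Λ_F(x)), where T_{α,β,θ}(t) = (α + t)^{θ−1}(t + 1)/(1 + β((α + t)^θ − α^θ)) for t ≥ 0. If α = 1 or θ = 1, 0 < β ≤ 1, and h_F is nondecreasing, then h_{G_{α,β,θ}} is nondecreasing (G_{α,β,θ} ∈ IHR). If α = 1 or θ = 1, β ≥ 1, and h_F is nonincreasing, then h_{G_{α,β,θ}} is nonincreasing (G_{α,β,θ} ∈ DHR). -/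
open Real

lemma doMO_T_denom_pos (α β θ s : ℝ) (hα : 0 ≤ α) (hβ : 0 < β) (hθ : 0 < θ)
    (hs : 0 ≤ s) : 0 < 1 + β * ((α + s) ^ θ - α ^ θ) := by
  have h1 : α ^ θ ≤ (α + s) ^ θ :=
    Real.rpow_le_rpow hα (by linarith) hθ.le
  nlinarith

lemma doMO_T_nonneg (α β θ s : ℝ) (hα : 0 ≤ α) (hβ : 0 < β) (hθ : 0 < θ)
    (hs : 0 ≤ s) :
    0 ≤ (α + s) ^ (θ - 1) * (s + 1) / (1 + β * ((α + s) ^ θ - α ^ θ)) := by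
  apply div_nonneg
  · exact mul_nonneg (Real.rpow_nonneg (by linarith) _) (by linarith)
  · exact (doMO_T_denom_pos α β θ s hα hβ hθ hs).le

lemma doMO_T_mono (α β θ : ℝ) (hα : 0 ≤ α) (hβ : 0 < β) (hθ : 0 < θ)
    (hspec : α = 1 ∨ θ = 1) (s t : ℝ) (hs : 0 ≤ s) (hst : s ≤ t) :
    (β ≤ 1 → (α + s) ^ (θ - 1) * (s + 1) / (1 + β * ((α + s) ^ θ - α ^ θ)) ≤
      (α + t) ^ (θ - 1) * (t + 1) / (1 + β * ((α + t) ^ θ - α ^ θ))) ∧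
    (1 ≤ β → (α + t) ^ (θ - 1) * (t + 1) / (1 + β * ((α + t) ^ θ - α ^ θ)) ≤
      (α + s) ^ (θ - 1) * (s + 1) / (1 + β * ((α + s) ^ θ - α ^ θ))) := by
  have hDs := doMO_T_denom_pos α β θ s hα hβ hθ hs
  have hDt := doMO_T_denom_pos α β θ t hα hβ hθ (hs.trans hst)
  rcases hspec with h1 | h1
  · subst h1
    have hsp : (0:ℝ) < 1 + s := by linarith
    have htp : (0:ℝ) < 1 + t := by linarith
    have hnums : (1 + s) ^ (θ - 1) * (s + 1) = (1 + s) ^ θ := by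
      rw [show (s+1) = (1+s)^(1:ℝ) by rw [Real.rpow_one]; ring,
        ← Real.rpow_add hsp]; ring_nf
    have hnumt : (1 + t) ^ (θ - 1) * (t + 1) = (1 + t) ^ θ := by
      rw [show (t+1) = (1+t)^(1:ℝ) by rw [Real.rpow_one]; ring,
        ← Real.rpow_add htp]; ring_nf
    have h1θ : (1:ℝ) ^ θ = 1 := Real.one_rpow θ
    set u := (1 + s) ^ θ with hu
    set v := (1 + t) ^ θ with hv
    have huv : u ≤ v := Real.rpow_le_rpow (by linarith) (by linarith) hθ.le
    have hu1 : 1 ≤ u := by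
      rw [hu]; exact Real.one_le_rpow (by linarith) hθ.le
    rw [hnums, hnumt, h1θ] at *
    constructor
    · intro hβ1
      rw [div_le_div_iff₀ hDs hDt]
      nlinarith [mul_nonneg (sub_nonneg.2 hβ1) (sub_nonneg.2 huv)]
    · intro hβ1
      rw [div_le_div_iff₀ hDt hDs]
      nlinarith [mul_nonneg (sub_nonneg.2 hβ1) (sub_nonneg.2 huv)]
  · subst h1
    simp only [sub_self, Real.rpow_zero, Real.rpow_one, one_mul] at *
    constructor
    · intro hβ1
      rw [div_le_div_iff₀ hDs hDt]
      nlinarith [mul_nonneg (sub_nonneg.2 hβ1) (sub_nonneg.2 hst)]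
    · intro hβ1
      rw [div_le_div_iff₀ hDt hDs]
      nlinarith [mul_nonneg (sub_nonneg.2 hβ1) (sub_nonneg.2 hst)]

/-- Hazard rate monotonicity for the d-oMO model in the cases
`α = 1` or `θ = 1`.  The hazard rate of `G_{α,β,θ}` is
`h_G(x) = βθ h_F(x) T_{α,β,θ}(Λ_F(x))` with
`T_{α,β,θ}(t) = (α+t)^{θ-1}(t+1)/(1+β((α+t)^θ-α^θ))`.  If `α = 1` or `θ = 1`,
`0 < β ≤ 1` and `h_F` is nondecreasing, then `h_G` is nondecreasing; if
`α = 1` or `θ = 1`, `β ≥ 1` and `h_F` is nonincreasing, then `h_G` is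
nonincreasing. -/
theorem doMO_IHR_DHR_special_cases
    (α β θ : ℝ) (hα : 0 ≤ α) (hβ : 0 < β) (hθ : 0 < θ)
    (hspec : α = 1 ∨ θ = 1)
    (Λ hF : ℝ → ℝ) (hΛ0 : ∀ x, 0 ≤ Λ x) (hΛmono : Monotone Λ)
    (hhF : ∀ x, 0 ≤ hF x) :
    (β ≤ 1 → Monotone hF →
      Monotone (fun x => β * θ * hF x *
        ((α + Λ x) ^ (θ - 1) * (Λ x + 1) /
          (1 + β * ((α + Λ x) ^ θ - α ^ θ))))) ∧
    (1 ≤ β → Antitone hF →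
      Antitone (fun x => β * θ * hF x *
        ((α + Λ x) ^ (θ - 1) * (Λ x + 1) /
          (1 + β * ((α + Λ x) ^ θ - α ^ θ))))) := by
  have hβθ : 0 ≤ β * θ := by positivity
  constructor
  · intro hβ1 hmono x y hxy
    have hT := (doMO_T_mono α β θ hα hβ hθ hspec (Λ x) (Λ y) (hΛ0 x)
      (hΛmono hxy)).1 hβ1
    have hTx := doMO_T_nonneg α β θ (Λ x) hα hβ hθ (hΛ0 x)
    dsimp only
    have h1 : β * θ * hF x ≤ β * θ * hF y :=
      mul_le_mul_of_nonneg_left (hmono hxy) hβθ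
    exact mul_le_mul h1 hT hTx (mul_nonneg hβθ (hhF y))
  · intro hβ1 hanti x y hxy
    have hT := (doMO_T_mono α β θ hα hβ hθ hspec (Λ x) (Λ y) (hΛ0 x)
      (hΛmono hxy)).2 hβ1
    have hTy := doMO_T_nonneg α β θ (Λ y) hα hβ hθ (hΛ0 y)
    dsimp only
    have h1 : β * θ * hF y ≤ β * θ * hF x :=
      mul_le_mul_of_nonneg_left (hanti hxy) hβθ
    exact mul_le_mul h1 hT hTy (mul_nonneg hβθ (hhF x))
end

section
/- Let F be a distribution function on [0,∞) with nonnegative odds function Λ_F(x) = F(x)/(1 − F(x)), and let α ≥ 0, β, θ > 0. If Λ_F is convex on [0,∞) and θ ≥ 1, then the odds function of the d-oMO distribution, Λ_{G_{α,β,θ}}(x) = β((α + Λ_F(x))^θ − α^θ), is convex on [0,∞) (G_{α,β,θ} ∈ IOR). If Λ_F is concave on [0,∞) and θ ≤ 1, then Λ_{G_{α,β,θ}} is concave on [0,∞) (G_{α,β,θ} ∈ DOR). -/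
open Real

private lemma comp_rpow_convex (α θ : ℝ) (hα : 0 ≤ α) (hθ : 0 < θ) (hθ1 : 1 ≤ θ)
    (Λ : ℝ → ℝ) (hΛ0 : ∀ x ∈ Set.Ici (0 : ℝ), 0 ≤ Λ x)
    (hΛ : ConvexOn ℝ (Set.Ici 0) Λ) :
    ConvexOn ℝ (Set.Ici 0) (fun x => (α + Λ x) ^ θ) := by
  have heq : (Λ + fun _ : ℝ => α) = fun x => α + Λ x := funext fun x => by
    simp [add_comm]
  have hf : ConvexOn ℝ (Set.Ici 0) (fun x => α + Λ x) := heq ▸ hΛ.add_const α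
  have hpos : ∀ x ∈ Set.Ici (0:ℝ), 0 ≤ α + Λ x := fun x hx =>
    add_nonneg hα (hΛ0 x hx)
  refine ⟨convex_Ici 0, fun x hx y hy a b ha hb hab => ?_⟩
  have hxy : a • x + b • y ∈ Set.Ici (0:ℝ) := (convex_Ici 0) hx hy ha hb hab
  have h1 : α + Λ (a • x + b • y) ≤ a * (α + Λ x) + b * (α + Λ y) := by
    have := hf.2 hx hy ha hb hab
    simpa using this
  have h2 : ((α + Λ (a • x + b • y)) : ℝ) ^ θ ≤ (a * (α + Λ x) + b * (α + Λ y)) ^ θ :=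
    Real.rpow_le_rpow (hpos _ hxy) h1 hθ.le
  have h3 : (a * (α + Λ x) + b * (α + Λ y)) ^ θ ≤ a * (α + Λ x) ^ θ + b * (α + Λ y) ^ θ := by
    have := (convexOn_rpow hθ1).2 (Set.mem_Ici.2 (hpos x hx)) (Set.mem_Ici.2 (hpos y hy))
      ha hb hab
    simpa using this
  simpa using h2.trans h3

private lemma comp_rpow_concave (α θ : ℝ) (hα : 0 ≤ α) (hθ : 0 < θ) (hθ1 : θ ≤ 1)
    (Λ : ℝ → ℝ) (hΛ0 : ∀ x ∈ Set.Ici (0 : ℝ), 0 ≤ Λ x)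
    (hΛ : ConcaveOn ℝ (Set.Ici 0) Λ) :
    ConcaveOn ℝ (Set.Ici 0) (fun x => (α + Λ x) ^ θ) := by
  have heq : (Λ + fun _ : ℝ => α) = fun x => α + Λ x := funext fun x => by
    simp [add_comm]
  have hf : ConcaveOn ℝ (Set.Ici 0) (fun x => α + Λ x) := heq ▸ hΛ.add_const α
  have hpos : ∀ x ∈ Set.Ici (0:ℝ), 0 ≤ α + Λ x := fun x hx =>
    add_nonneg hα (hΛ0 x hx)
  refine ⟨convex_Ici 0, fun x hx y hy a b ha hb hab => ?_⟩
  have hxy : a • x + b • y ∈ Set.Ici (0:ℝ) := (convex_Ici 0) hx hy ha hb hab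
  have h1 : a * (α + Λ x) + b * (α + Λ y) ≤ α + Λ (a • x + b • y) := by
    have := hf.2 hx hy ha hb hab
    simpa using this
  have h2 : (a * (α + Λ x) + b * (α + Λ y)) ^ θ ≤ ((α + Λ (a • x + b • y)) : ℝ) ^ θ :=
    Real.rpow_le_rpow (add_nonneg (mul_nonneg ha (hpos x hx)) (mul_nonneg hb (hpos y hy))) h1 hθ.le
  have h3 : a * (α + Λ x) ^ θ + b * (α + Λ y) ^ θ ≤ (a * (α + Λ x) + b * (α + Λ y)) ^ θ := by
    have := (Real.concaveOn_rpow hθ.le hθ1).2 (Set.mem_Ici.2 (hpos x hx))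
      (Set.mem_Ici.2 (hpos y hy)) ha hb hab
    simpa using this
  simpa using h3.trans h2

/-- Preservation of odds-rate monotonicity by the d-oMO model.
If the odds function `Λ_F` is nonnegative and convex on `[0,∞)` and `θ ≥ 1`,
then the odds function `x ↦ β((α + Λ_F(x))^θ - α^θ)` of `G_{α,β,θ}` is convex
on `[0,∞)`; if `Λ_F` is concave and `θ ≤ 1`, it is concave. -/
theorem doMO_IOR_DOR_preservation
    (α β θ : ℝ) (hα : 0 ≤ α) (hβ : 0 < β) (hθ : 0 < θ)
    (Λ : ℝ → ℝ) (hΛ0 : ∀ x ∈ Set.Ici (0 : ℝ), 0 ≤ Λ x) :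
    (ConvexOn ℝ (Set.Ici 0) Λ → 1 ≤ θ →
      ConvexOn ℝ (Set.Ici 0) (fun x => β * ((α + Λ x) ^ θ - α ^ θ))) ∧
    (ConcaveOn ℝ (Set.Ici 0) Λ → θ ≤ 1 →
      ConcaveOn ℝ (Set.Ici 0) (fun x => β * ((α + Λ x) ^ θ - α ^ θ))) := by
  constructor
  · intro hΛ hθ1
    have h := (comp_rpow_convex α θ hα hθ hθ1 Λ hΛ0 hΛ).smul hβ.le
    have h2 := h.add_const (-(β * α ^ θ))
    refine h2.congr fun x _ => ?_
    simp [smul_eq_mul]; ring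
  · intro hΛ hθ1
    have h := (comp_rpow_concave α θ hα hθ hθ1 Λ hΛ0 hΛ).smul hβ.le
    have h2 := h.add_const (-(β * α ^ θ))
    refine h2.congr fun x _ => ?_
    simp [smul_eq_mul]; ring
end

section
/- Let α, β, θ > 0 and α₁, β₁, θ₁ > 0 satisfy condition (ST1): θ < θ₁, α^{θ−1}βθ < α₁^{θ₁−1}β₁θ₁, and α₁(1 − θ) − α(1 − θ₁) ≥ 0. Then for every x ≥ 0, 1 − K_{α,β,θ}(x) ≤ 1 − K_{α₁,β₁,θ₁}(x); that is, K_{α,β,θ} ≤_st K_{α₁,β₁,θ₁}. -/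
open Real

/-- Monotonicity of `t ↦ (θ₁-1) log(t+α₁) - (θ-1) log(t+α)` on `[0,∞)`. -/
private lemma ELL_phi_mono (α θ α₁ θ₁ : ℝ)
    (hα : 0 < α) (hα₁ : 0 < α₁) (hST1a : θ < θ₁)
    (hST1c : 0 ≤ α₁ * (1 - θ) - α * (1 - θ₁)) :
    MonotoneOn (fun t => (θ₁ - 1) * Real.log (t + α₁) - (θ - 1) * Real.log (t + α))
      (Set.Ici (0:ℝ)) := by
  have hd : ∀ t ∈ Set.Ioi (0:ℝ),
      HasDerivAt (fun t => (θ₁ - 1) * Real.log (t + α₁) - (θ - 1) * Real.log (t + α))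
        ((θ₁ - 1) * (1 / (t + α₁)) - (θ - 1) * (1 / (t + α))) t := by
    intro t ht
    have ht' : (0:ℝ) < t := ht
    have h1 : t + α₁ ≠ 0 := by positivity
    have h2 : t + α ≠ 0 := by positivity
    have d1 : HasDerivAt (fun t => Real.log (t + α₁)) (1 / (t + α₁)) t := by
      simpa using (((hasDerivAt_id t).add_const α₁).log h1)
    have d2 : HasDerivAt (fun t => Real.log (t + α)) (1 / (t + α)) t := by
      simpa using (((hasDerivAt_id t).add_const α).log h2)
    exact (d1.const_mul _).sub (d2.const_mul _)
  apply monotoneOn_of_deriv_nonneg (convex_Ici 0)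
  · apply ContinuousOn.sub
    · exact continuousOn_const.mul (((continuous_id.add continuous_const).continuousOn).log
        (fun t ht => by have : (0:ℝ) ≤ t := ht; show t + α₁ ≠ 0; positivity))
    · exact continuousOn_const.mul (((continuous_id.add continuous_const).continuousOn).log
        (fun t ht => by have : (0:ℝ) ≤ t := ht; show t + α ≠ 0; positivity))
  · rw [interior_Ici]
    intro t ht
    exact ((hd t ht).differentiableAt).differentiableWithinAt
  · rw [interior_Ici]
    intro t ht
    rw [(hd t ht).deriv]
    have ht' : (0:ℝ) < t := ht
    have h1 : (0:ℝ) < t + α₁ := by positivity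
    have h2 : (0:ℝ) < t + α := by positivity
    rw [sub_nonneg, mul_one_div, mul_one_div, div_le_div_iff₀ h2 h1]
    nlinarith [mul_pos h2 h1]

private lemma ELL_deriv_lt (α β θ α₁ β₁ θ₁ : ℝ)
    (hα : 0 < α) (hβ : 0 < β) (hθ : 0 < θ)
    (hα₁ : 0 < α₁) (hβ₁ : 0 < β₁) (hθ₁ : 0 < θ₁)
    (hST1a : θ < θ₁)
    (hST1b : α ^ (θ - 1) * β * θ < α₁ ^ (θ₁ - 1) * β₁ * θ₁)
    (hST1c : 0 ≤ α₁ * (1 - θ) - α * (1 - θ₁))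
    (t : ℝ) (ht : 0 ≤ t) :
    β * θ * (t + α) ^ (θ - 1) < β₁ * θ₁ * (t + α₁) ^ (θ₁ - 1) := by
  have htα : 0 < t + α := by linarith
  have htα₁ : 0 < t + α₁ := by linarith
  have hE : (θ-1) * Real.log (t+α) - (θ-1) * Real.log α ≤
      (θ₁-1) * Real.log (t+α₁) - (θ₁-1) * Real.log α₁ := by
    have := ELL_phi_mono α θ α₁ θ₁ hα hα₁ hST1a hST1c
      (Set.self_mem_Ici) (Set.mem_Ici.2 ht) ht
    simp only [zero_add] at this
    linarith
  set E : ℝ := (θ-1) * Real.log (t+α) - (θ-1) * Real.log α with hEdef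
  set E₁ : ℝ := (θ₁-1) * Real.log (t+α₁) - (θ₁-1) * Real.log α₁ with hE₁def
  have hexp : Real.exp (Real.log α * (θ-1)) * Real.exp E = Real.exp (Real.log (t+α) * (θ-1)) := by
    rw [← Real.exp_add]; congr 1; rw [hEdef]; ring
  have hexp₁ : Real.exp (Real.log α₁ * (θ₁-1)) * Real.exp E₁ =
      Real.exp (Real.log (t+α₁) * (θ₁-1)) := by
    rw [← Real.exp_add]; congr 1; rw [hE₁def]; ring
  have h1 : β * θ * (t+α) ^ (θ-1) = (α ^ (θ-1) * β * θ) * Real.exp E := by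
    rw [Real.rpow_def_of_pos htα, Real.rpow_def_of_pos hα, ← hexp]; ring
  have h2 : β₁ * θ₁ * (t+α₁) ^ (θ₁-1) = (α₁ ^ (θ₁-1) * β₁ * θ₁) * Real.exp E₁ := by
    rw [Real.rpow_def_of_pos htα₁, Real.rpow_def_of_pos hα₁, ← hexp₁]; ring
  calc β * θ * (t+α) ^ (θ-1) = (α ^ (θ-1) * β * θ) * Real.exp E := h1
    _ ≤ (α ^ (θ-1) * β * θ) * Real.exp E₁ := by
        apply mul_le_mul_of_nonneg_left (Real.exp_le_exp.2 hE)
        positivity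
    _ < (α₁ ^ (θ₁-1) * β₁ * θ₁) * Real.exp E₁ :=
        mul_lt_mul_of_pos_right hST1b (Real.exp_pos _)
    _ = β₁ * θ₁ * (t+α₁) ^ (θ₁-1) := h2.symm

private lemma ELL_H_nonneg (α β θ α₁ β₁ θ₁ : ℝ)
    (hα : 0 < α) (hβ : 0 < β) (hθ : 0 < θ)
    (hα₁ : 0 < α₁) (hβ₁ : 0 < β₁) (hθ₁ : 0 < θ₁)
    (hST1a : θ < θ₁)
    (hST1b : α ^ (θ - 1) * β * θ < α₁ ^ (θ₁ - 1) * β₁ * θ₁)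
    (hST1c : 0 ≤ α₁ * (1 - θ) - α * (1 - θ₁))
    (t : ℝ) (ht : 0 ≤ t) :
    β * ((t + α) ^ θ - α ^ θ) ≤ β₁ * ((t + α₁) ^ θ₁ - α₁ ^ θ₁) := by
  set H : ℝ → ℝ := fun s => β₁ * ((s + α₁) ^ θ₁ - α₁ ^ θ₁) - β * ((s + α) ^ θ - α ^ θ)
    with hHdef
  have hmono : StrictMonoOn H (Set.Ici 0) := by
    apply strictMonoOn_of_deriv_pos (convex_Ici 0)
    · apply ContinuousOn.sub <;> apply continuousOn_const.mul <;> apply ContinuousOn.sub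
      · exact ((continuous_id.add continuous_const).continuousOn).rpow_const
          (fun s hs => Or.inl (by have : (0:ℝ) ≤ s := hs; show s + α₁ ≠ 0; positivity))
      · exact continuousOn_const
      · exact ((continuous_id.add continuous_const).continuousOn).rpow_const
          (fun s hs => Or.inl (by have : (0:ℝ) ≤ s := hs; show s + α ≠ 0; positivity))
      · exact continuousOn_const
    · rw [interior_Ici]
      intro s hs
      have hs' : (0:ℝ) < s := hs
      have h1 : (0:ℝ) < s + α₁ := by linarith
      have h2 : (0:ℝ) < s + α := by linarith
      have d1 : HasDerivAt (fun s : ℝ => (s + α₁) ^ θ₁) (1 * θ₁ * (s + α₁) ^ (θ₁ - 1)) s :=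
        ((hasDerivAt_id s).add_const α₁).rpow_const (Or.inl h1.ne')
      have d2 : HasDerivAt (fun s : ℝ => (s + α) ^ θ) (1 * θ * (s + α) ^ (θ - 1)) s :=
        ((hasDerivAt_id s).add_const α).rpow_const (Or.inl h2.ne')
      have d : HasDerivAt H
          (β₁ * (1 * θ₁ * (s + α₁) ^ (θ₁ - 1)) - β * (1 * θ * (s + α) ^ (θ - 1))) s :=
        ((d1.sub_const _).const_mul β₁).sub ((d2.sub_const _).const_mul β)
      rw [d.deriv]
      have key := ELL_deriv_lt α β θ α₁ β₁ θ₁ hα hβ hθ hα₁ hβ₁ hθ₁ hST1a hST1b hST1c s hs'.le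
      nlinarith
  have h0 : H 0 = 0 := by simp [hHdef]
  have hge : 0 ≤ H t := by
    rcases eq_or_lt_of_le ht with h | h
    · rw [← h, h0]
    · have := hmono Set.self_mem_Ici (Set.mem_Ici.2 ht) h
      rw [h0] at this
      exact this.le
  simp only [hHdef] at hge
  linarith

/-- Under condition (ST1) — `θ < θ₁`,
`α^{θ-1}βθ < α₁^{θ₁-1}β₁θ₁` and `α₁(1-θ) - α(1-θ₁) ≥ 0` — the enlarged
log-logistic distributions satisfy `K_{α,β,θ} ≤_st K_{α₁,β₁,θ₁}`, i.e. the
survival function of `K_{α,β,θ}` is pointwise below that of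
`K_{α₁,β₁,θ₁}` on `[0,∞)`. -/
theorem ELL_st_order_ST1
    (α β θ α₁ β₁ θ₁ : ℝ)
    (hα : 0 < α) (hβ : 0 < β) (hθ : 0 < θ)
    (hα₁ : 0 < α₁) (hβ₁ : 0 < β₁) (hθ₁ : 0 < θ₁)
    (hST1a : θ < θ₁)
    (hST1b : α ^ (θ - 1) * β * θ < α₁ ^ (θ₁ - 1) * β₁ * θ₁)
    (hST1c : 0 ≤ α₁ * (1 - θ) - α * (1 - θ₁)) :
    ∀ x ≥ (0 : ℝ),
      1 / ((x / β + α ^ θ) ^ (1 / θ) + 1 - α) ≤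
        1 / ((x / β₁ + α₁ ^ θ₁) ^ (1 / θ₁) + 1 - α₁) := by
  intro x hx
  have hPα : (0:ℝ) < α ^ θ := Real.rpow_pos_of_pos hα θ
  have hPα₁ : (0:ℝ) < α₁ ^ θ₁ := Real.rpow_pos_of_pos hα₁ θ₁
  have hP : (0:ℝ) < x / β + α ^ θ := by positivity
  have hQ : (0:ℝ) < x / β₁ + α₁ ^ θ₁ := by positivity
  set u : ℝ := (x / β + α ^ θ) ^ (1 / θ) with hu
  set v : ℝ := (x / β₁ + α₁ ^ θ₁) ^ (1 / θ₁) with hv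
  have hαu : α ≤ u := by
    have h1 : α = (α ^ θ) ^ (1 / θ) := by
      rw [one_div, Real.rpow_rpow_inv hα.le hθ.ne']
    calc α = (α ^ θ) ^ (1 / θ) := h1
      _ ≤ (x / β + α ^ θ) ^ (1 / θ) :=
          Real.rpow_le_rpow hPα.le (by linarith [div_nonneg hx hβ.le]) (by positivity)
  have hα₁v : α₁ ≤ v := by
    have h1 : α₁ = (α₁ ^ θ₁) ^ (1 / θ₁) := by
      rw [one_div, Real.rpow_rpow_inv hα₁.le hθ₁.ne']
    calc α₁ = (α₁ ^ θ₁) ^ (1 / θ₁) := h1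
      _ ≤ (x / β₁ + α₁ ^ θ₁) ^ (1 / θ₁) :=
          Real.rpow_le_rpow hPα₁.le (by linarith [div_nonneg hx hβ₁.le]) (by positivity)
  have huθ : u ^ θ = x / β + α ^ θ := by
    rw [hu, one_div, Real.rpow_inv_rpow hP.le hθ.ne']
  set t : ℝ := u - α with htdef
  have ht : 0 ≤ t := by simp [htdef]; linarith
  have hH := ELL_H_nonneg α β θ α₁ β₁ θ₁ hα hβ hθ hα₁ hβ₁ hθ₁ hST1a hST1b hST1c t ht
  have htα : t + α = u := by rw [htdef]; ring
  rw [htα, huθ] at hH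
  have hx' : β * (x / β + α ^ θ - α ^ θ) = x := by field_simp; ring
  rw [hx'] at hH
  -- hH : x ≤ β₁ * ((t + α₁) ^ θ₁ - α₁ ^ θ₁)
  have hkey : x / β₁ + α₁ ^ θ₁ ≤ (t + α₁) ^ θ₁ := by
    rw [div_add' _ _ _ hβ₁.ne', div_le_iff₀ hβ₁]
    nlinarith
  have hvle : v ≤ t + α₁ := by
    have h2 : ((t + α₁) ^ θ₁) ^ (1 / θ₁) = t + α₁ := by
      rw [one_div, Real.rpow_rpow_inv (by linarith) hθ₁.ne']
    calc v ≤ ((t + α₁) ^ θ₁) ^ (1 / θ₁) :=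
          Real.rpow_le_rpow hQ.le hkey (by positivity)
      _ = t + α₁ := h2
  have hden : (0:ℝ) < v + 1 - α₁ := by linarith
  apply one_div_le_one_div_of_le hden
  rw [htdef] at hvle
  linarith
end

section
/- Let α, β, θ > 0 and α₁, β₁ > 0 satisfy condition (ST2): β < β₁, α^{θ−1}β < α₁^{θ−1}β₁, and (1 − θ)(α₁^θ β₁ − α^θ β) > 0. Then for every x ≥ 0, 1 − K_{α,β,θ}(x) ≤ 1 − K_{α₁,β₁,θ}(x); that is, K_{α,β,θ} ≤_st K_{α₁,β₁,θ}. -/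
open Real

private lemma ell_id1 {θ : ℝ} (hθ : 0 < θ) (hθ1 : θ ≠ 1) (y : ℝ)
    (a c : ℝ) (ha : 0 < a) (hc : 0 < c) (hy : 0 ≤ y) :
    (y / c + a ^ θ) ^ (1 / θ - 1) / c
      = (y * c ^ (θ / (θ - 1) - 1) + (a ^ (θ - 1) * c) ^ (θ / (θ - 1))) ^ (1 / θ - 1) := by
  have hθ1' : θ - 1 ≠ 0 := sub_ne_zero.mpr hθ1
  have hs : 0 < y / c + a ^ θ := by positivity
  have e1 : y * c ^ (θ / (θ - 1) - 1) + (a ^ (θ - 1) * c) ^ (θ / (θ - 1))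
      = (y / c + a ^ θ) * c ^ (θ / (θ - 1)) := by
    have h1 : c ^ (θ / (θ - 1) - 1) = c ^ (θ / (θ - 1)) / c := by
      rw [Real.rpow_sub hc, Real.rpow_one]
    have h2 : (a ^ (θ - 1) * c) ^ (θ / (θ - 1)) = a ^ θ * c ^ (θ / (θ - 1)) := by
      rw [Real.mul_rpow (by positivity) hc.le, ← Real.rpow_mul ha.le]
      congr 1
      field_simp
    rw [h1, h2]; ring
  rw [e1, Real.mul_rpow hs.le (by positivity), ← Real.rpow_mul hc.le]
  have h3 : θ / (θ - 1) * (1 / θ - 1) = -1 := by field_simp; ring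
  rw [h3, Real.rpow_neg_one, div_eq_mul_inv]

private lemma ell_key (α β θ α₁ β₁ : ℝ)
    (hα : 0 < α) (hβ : 0 < β) (hθ : 0 < θ) (hα₁ : 0 < α₁) (hβ₁ : 0 < β₁)
    (hθ1 : θ ≠ 1)
    (hST2a : β < β₁)
    (hST2b : α ^ (θ - 1) * β < α₁ ^ (θ - 1) * β₁)
    (y : ℝ) (hy : 0 ≤ y) :
    (y / β₁ + α₁ ^ θ) ^ (1 / θ - 1) / β₁ ≤ (y / β + α ^ θ) ^ (1 / θ - 1) / β := by
  have hθ1' : θ - 1 ≠ 0 := sub_ne_zero.mpr hθ1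
  set b := θ / (θ - 1) with hb_def
  have hab : (0:ℝ) < α ^ (θ - 1) * β := by positivity
  rw [ell_id1 hθ hθ1 y α β hα hβ hy, ell_id1 hθ hθ1 y α₁ β₁ hα₁ hβ₁ hy]
  rcases lt_or_gt_of_ne hθ1 with h1 | h1
  · -- θ < 1 : exponent 1/θ - 1 > 0, b < 0
    have hp : (0:ℝ) ≤ 1 / θ - 1 := by
      have : 1 ≤ 1 / θ := one_le_one_div hθ h1.le
      linarith
    have hb : b ≤ 0 := div_nonpos_of_nonneg_of_nonpos hθ.le (by linarith)
    have hb1 : b - 1 ≤ 0 := by linarith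
    have t1 : y * β₁ ^ (b - 1) ≤ y * β ^ (b - 1) :=
      mul_le_mul_of_nonneg_left (Real.rpow_le_rpow_of_nonpos hβ hST2a.le hb1) hy
    have t2 : (α₁ ^ (θ - 1) * β₁) ^ b ≤ (α ^ (θ - 1) * β) ^ b :=
      Real.rpow_le_rpow_of_nonpos hab hST2b.le hb
    refine Real.rpow_le_rpow ?_ (by linarith) hp
    exact add_nonneg (mul_nonneg hy (Real.rpow_nonneg hβ₁.le _)) (Real.rpow_nonneg (by positivity) _)
  · -- θ > 1 : exponent 1/θ - 1 < 0, b > 0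
    have hp : 1 / θ - 1 ≤ 0 := by
      have : 1 / θ ≤ 1 := by
        rw [div_le_one hθ]; linarith
      linarith
    have hb : 0 ≤ b := div_nonneg hθ.le (by linarith)
    have hb1 : 0 ≤ b - 1 := by
      have : 1 ≤ b := by
        rw [hb_def, le_div_iff₀ (by linarith : (0:ℝ) < θ - 1)]; linarith
      linarith
    have t1 : y * β ^ (b - 1) ≤ y * β₁ ^ (b - 1) :=
      mul_le_mul_of_nonneg_left (Real.rpow_le_rpow hβ.le hST2a.le hb1) hy
    have t2 : (α ^ (θ - 1) * β) ^ b ≤ (α₁ ^ (θ - 1) * β₁) ^ b :=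
      Real.rpow_le_rpow hab.le hST2b.le hb
    refine Real.rpow_le_rpow_of_nonpos ?_ (by linarith) hp
    exact add_pos_of_nonneg_of_pos (mul_nonneg hy (Real.rpow_nonneg hβ.le _))
      (Real.rpow_pos_of_pos hab _)

private lemma ell_hasDerivAt {θ : ℝ} (a c : ℝ) (ha : 0 < a) (hc : 0 < c)
    (y : ℝ) (hy : 0 ≤ y) :
    HasDerivAt (fun t : ℝ => (t / c + a ^ θ) ^ (1 / θ))
      (1 / θ * (y / c + a ^ θ) ^ (1 / θ - 1) * (1 / c)) y := by
  have hs : 0 < y / c + a ^ θ := by positivity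
  have h1 : HasDerivAt (fun t : ℝ => t / c + a ^ θ) (1 / c) y := by
    simpa using ((hasDerivAt_id y).div_const c).add_const (a ^ θ)
  simpa [Function.comp_def] using (Real.hasDerivAt_rpow_const (p := 1 / θ) (Or.inl hs.ne')).comp y h1

/-- Under condition (ST2) — equal shape `θ`, `β < β₁`,
`α^{θ-1}β < α₁^{θ-1}β₁` and `(1-θ)(α₁^θ β₁ - α^θ β) > 0` — the enlarged
log-logistic distributions satisfy `K_{α,β,θ} ≤_st K_{α₁,β₁,θ}`. -/
theorem ELL_st_order_ST2
    (α β θ α₁ β₁ : ℝ)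
    (hα : 0 < α) (hβ : 0 < β) (hθ : 0 < θ)
    (hα₁ : 0 < α₁) (hβ₁ : 0 < β₁)
    (hST2a : β < β₁)
    (hST2b : α ^ (θ - 1) * β < α₁ ^ (θ - 1) * β₁)
    (hST2c : 0 < (1 - θ) * (α₁ ^ θ * β₁ - α ^ θ * β)) :
    ∀ x ≥ (0 : ℝ),
      1 / ((x / β + α ^ θ) ^ (1 / θ) + 1 - α) ≤
        1 / ((x / β₁ + α₁ ^ θ) ^ (1 / θ) + 1 - α₁) := by
  intro x hx
  have hθ1 : θ ≠ 1 := by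
    rintro rfl; simp at hST2c
  -- the "base to the 1/θ" of a^θ is a
  have hpow : ∀ a : ℝ, 0 < a → (a ^ θ) ^ (1 / θ) = a := by
    intro a ha
    rw [← Real.rpow_mul ha.le, mul_one_div_cancel hθ.ne', Real.rpow_one]
  set g : ℝ → ℝ := fun y => (y / β + α ^ θ) ^ (1 / θ) - (y / β₁ + α₁ ^ θ) ^ (1 / θ) with hg_def
  have hgderiv : ∀ y : ℝ, 0 ≤ y → HasDerivAt g
      (1 / θ * (y / β + α ^ θ) ^ (1 / θ - 1) * (1 / β)
        - 1 / θ * (y / β₁ + α₁ ^ θ) ^ (1 / θ - 1) * (1 / β₁)) y := by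
    intro y hy
    exact (ell_hasDerivAt α β hα hβ y hy).sub (ell_hasDerivAt α₁ β₁ hα₁ hβ₁ y hy)
  have hmono : MonotoneOn g (Set.Ici (0:ℝ)) := by
    apply monotoneOn_of_deriv_nonneg (convex_Ici 0)
    · have c1 : Continuous fun y : ℝ => (y / β + α ^ θ) ^ (1 / θ) := by
        apply Continuous.rpow_const (by continuity)
        intro y; right; positivity
      have c2 : Continuous fun y : ℝ => (y / β₁ + α₁ ^ θ) ^ (1 / θ) := by
        apply Continuous.rpow_const (by continuity)
        intro y; right; positivity
      exact (c1.sub c2).continuousOn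
    · intro y hy
      rw [interior_Ici] at hy
      exact (hgderiv y (le_of_lt hy)).differentiableAt.differentiableWithinAt
    · intro y hy
      rw [interior_Ici] at hy
      rw [(hgderiv y hy.le).deriv]
      have key := ell_key α β θ α₁ β₁ hα hβ hθ hα₁ hβ₁ hθ1 hST2a hST2b y hy.le
      have h0 : (0:ℝ) ≤ 1 / θ := by positivity
      have := mul_le_mul_of_nonneg_left key h0
      have e : ∀ s c : ℝ, 1 / θ * (s / c) = 1 / θ * s * (1 / c) := by intros; ring
      rw [e, e] at this
      linarith
  have hg0 : g 0 = α - α₁ := by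
    simp only [hg_def, zero_div, zero_add]
    rw [hpow α hα, hpow α₁ hα₁]
  have hgx : α - α₁ ≤ g x := by
    rw [← hg0]
    exact hmono (Set.self_mem_Ici) hx hx
  have hD₁pos : 0 < (x / β₁ + α₁ ^ θ) ^ (1 / θ) + 1 - α₁ := by
    have h1 : α₁ ≤ (x / β₁ + α₁ ^ θ) ^ (1 / θ) := by
      nth_rewrite 1 [← hpow α₁ hα₁]
      apply Real.rpow_le_rpow (by positivity) _ (by positivity)
      have : 0 ≤ x / β₁ := div_nonneg hx hβ₁.le
      linarith
    linarith
  apply one_div_le_one_div_of_le hD₁pos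
  have : (x / β₁ + α₁ ^ θ) ^ (1 / θ) - α₁ ≤ (x / β + α ^ θ) ^ (1 / θ) - α := by
    have := hgx
    simp only [hg_def] at this
    linarith
  linarith
end

section
/- For the enlarged log-logistic distributions the following stochastic order relations hold: (1) if α ≥ α₁ ≥ 0 and 0 < θ ≤ 1, then for every β > 0 and every x ≥ 0, 1 − K_{α,β,θ}(x) ≤ 1 − K_{α₁,β,θ}(x), i.e. K_{α,β,θ} ≤_st K_{α₁,β,θ}; (2) if 0 < β ≤ β₁ and 0 < θ ≤ 1, then for every α ≥ 0 and every x ≥ 0, 1 − K_{α,β,θ}(x) ≤ 1 − K_{α,β₁,θ}(x), i.e. K_{α,β,θ} ≤_st K_{α,β₁,θ}; (3) if α > 0, 0 < θ < θ₁ ≤ 1, α^{θ₁−θ} > θ/θ₁, and (1 − θ)/(α^θ θ) > (1 − θ₁)/(α^{θ₁} θ₁), then for every β > 0 and every x ≥ 0, 1 − K_{α,β,θ}(x) ≤ 1 − K_{α,β,θ₁}(x), i.e. K_{α,β,θ} ≤_st K_{α,β,θ₁}. -/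
open Real Set

/-- For `p ≥ 1` and `c ≥ 0`, the map `x ↦ (x+c)^p - x^p` is monotone on `[0,∞)`. -/
lemma ELL_mono_aux {p c : ℝ} (hp : 1 ≤ p) (hc : 0 ≤ c) :
    MonotoneOn (fun x : ℝ => (x + c) ^ p - x ^ p) (Set.Ici 0) := by
  have hp0 : (0 : ℝ) ≤ p := le_trans zero_le_one hp
  have hderiv : ∀ x : ℝ, HasDerivAt (fun x : ℝ => (x + c) ^ p - x ^ p)
      (p * (x + c) ^ (p - 1) * 1 - p * x ^ (p - 1)) x := by
    intro x
    exact ((Real.hasDerivAt_rpow_const (p := p) (x := x + c) (Or.inr hp)).comp x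
      ((hasDerivAt_id x).add_const c)).sub (Real.hasDerivAt_rpow_const (Or.inr hp))
  apply monotoneOn_of_deriv_nonneg (convex_Ici 0)
  · exact Continuous.continuousOn (((Real.continuous_rpow_const hp0).comp
      (continuous_id.add continuous_const)).sub (Real.continuous_rpow_const hp0))
  · intro x _
    exact (hderiv x).differentiableAt.differentiableWithinAt
  · intro x hx
    rw [interior_Ici] at hx
    rw [(hderiv x).deriv]
    have h1 : x ^ (p - 1) ≤ (x + c) ^ (p - 1) :=
      Real.rpow_le_rpow hx.le (by linarith) (by linarith)
    nlinarith [mul_le_mul_of_nonneg_left h1 hp0]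

/-- Key superadditivity: for `p ≥ 1`, `c ≥ 0`, `0 ≤ b ≤ a`:
`(c+b)^p - b^p ≤ (c+a)^p - a^p`. -/
lemma ELL_key {p c a b : ℝ} (hp : 1 ≤ p) (hc : 0 ≤ c) (hb : 0 ≤ b) (hba : b ≤ a) :
    (c + b) ^ p - b ^ p ≤ (c + a) ^ p - a ^ p := by
  have := ELL_mono_aux hp hc (Set.mem_Ici.mpr hb) (Set.mem_Ici.mpr (hb.trans hba)) hba
  simpa [add_comm] using this

/-- `(α^θ)^(1/θ) = α`. -/
lemma ELL_rpow_cancel {α θ : ℝ} (hα : 0 ≤ α) (hθ : 0 < θ) :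
    (α ^ θ) ^ (1 / θ) = α := by
  rw [one_div]
  exact Real.rpow_rpow_inv hα hθ.ne'

/-- The denominator is at least `1`. -/
lemma ELL_denom_ge_one {α θ c : ℝ} (hα : 0 ≤ α) (hθ : 0 < θ) (hc : 0 ≤ c) :
    1 ≤ (c + α ^ θ) ^ (1 / θ) + 1 - α := by
  have h1 : (α ^ θ) ^ (1 / θ) ≤ (c + α ^ θ) ^ (1 / θ) :=
    Real.rpow_le_rpow (Real.rpow_nonneg hα θ) (by linarith) (by positivity)
  rw [ELL_rpow_cancel hα hθ] at h1
  linarith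

/-- One-parameter `≤_st` comparisons within the enlarged
log-logistic family `K_{α,β,θ}(x) = 1 - 1/((x/β + α^θ)^{1/θ} + 1 - α)`:
(1) if `α ≥ α₁ ≥ 0` and `θ ≤ 1` then `K_{α,β,θ} ≤_st K_{α₁,β,θ}`;
(2) if `β ≤ β₁` and `θ ≤ 1` then `K_{α,β,θ} ≤_st K_{α,β₁,θ}`;
(3) if `θ < θ₁ ≤ 1`, `α^{θ₁-θ} > θ/θ₁` and
`(1-θ)/(α^θ θ) > (1-θ₁)/(α^{θ₁} θ₁)` then `K_{α,β,θ} ≤_st K_{α,β,θ₁}`. -/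
theorem ELL_st_order_one_parameter :
    (∀ α α₁ β θ : ℝ, 0 ≤ α₁ → α₁ ≤ α → 0 < β → 0 < θ → θ ≤ 1 →
      ∀ x ≥ (0 : ℝ),
        1 / ((x / β + α ^ θ) ^ (1 / θ) + 1 - α) ≤
          1 / ((x / β + α₁ ^ θ) ^ (1 / θ) + 1 - α₁)) ∧
    (∀ α β β₁ θ : ℝ, 0 ≤ α → 0 < β → β ≤ β₁ → 0 < θ → θ ≤ 1 →
      ∀ x ≥ (0 : ℝ),
        1 / ((x / β + α ^ θ) ^ (1 / θ) + 1 - α) ≤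
          1 / ((x / β₁ + α ^ θ) ^ (1 / θ) + 1 - α)) ∧
    (∀ α β θ θ₁ : ℝ, 0 < α → 0 < β → 0 < θ → θ < θ₁ → θ₁ ≤ 1 →
      θ / θ₁ < α ^ (θ₁ - θ) →
      (1 - θ₁) / (α ^ θ₁ * θ₁) < (1 - θ) / (α ^ θ * θ) →
      ∀ x ≥ (0 : ℝ),
        1 / ((x / β + α ^ θ) ^ (1 / θ) + 1 - α) ≤
          1 / ((x / β + α ^ θ₁) ^ (1 / θ₁) + 1 - α)) := by
  refine ⟨?_, ?_, ?_⟩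
  · -- (1) monotone in α
    intro α α₁ β θ hα₁ hαα hβ hθ hθ1 x hx
    have hα : 0 ≤ α := hα₁.trans hαα
    have hc : 0 ≤ x / β := div_nonneg hx hβ.le
    have hp : 1 ≤ 1 / θ := (le_div_iff₀ hθ).mpr (by linarith)
    have hb : 0 ≤ α₁ ^ θ := Real.rpow_nonneg hα₁ θ
    have hba : α₁ ^ θ ≤ α ^ θ := Real.rpow_le_rpow hα₁ hαα hθ.le
    have hkey := ELL_key (a := α ^ θ) (b := α₁ ^ θ) hp hc hb hba
    rw [ELL_rpow_cancel hα hθ, ELL_rpow_cancel hα₁ hθ] at hkey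
    have hpos : 0 < (x / β + α₁ ^ θ) ^ (1 / θ) + 1 - α₁ :=
      lt_of_lt_of_le one_pos (ELL_denom_ge_one hα₁ hθ hc)
    exact one_div_le_one_div_of_le hpos (by linarith)
  · -- (2) monotone in β
    intro α β β₁ θ hα hβ hββ hθ hθ1 x hx
    have hβ₁ : 0 < β₁ := hβ.trans_le hββ
    have hc₁ : 0 ≤ x / β₁ := div_nonneg hx hβ₁.le
    have hdiv : x / β₁ ≤ x / β := div_le_div_of_nonneg_left hx hβ hββ
    have hpow : (x / β₁ + α ^ θ) ^ (1 / θ) ≤ (x / β + α ^ θ) ^ (1 / θ) :=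
      Real.rpow_le_rpow (by positivity) (by linarith) (by positivity)
    have hpos : 0 < (x / β₁ + α ^ θ) ^ (1 / θ) + 1 - α :=
      lt_of_lt_of_le one_pos (ELL_denom_ge_one hα hθ hc₁)
    exact one_div_le_one_div_of_le hpos (by linarith)
  · -- (3) monotone in θ
    intro α β θ θ₁ hα hβ hθ hθθ hθ₁1 hhyp _ x hx
    have hθ₁ : 0 < θ₁ := hθ.trans hθθ
    have hc : 0 ≤ x / β := div_nonneg hx hβ.le
    set c := x / β with hcdef
    set s := α ^ θ with hsdef
    have hs : 0 < s := Real.rpow_pos_of_pos hα θ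
    set r := θ₁ / θ with hrdef
    have hr1 : 1 ≤ r := (one_le_div hθ).mpr hθθ.le
    have hθr : θ * r = θ₁ := by rw [hrdef]; field_simp
    have hθr1 : θ * (r - 1) = θ₁ - θ := by rw [hrdef]; field_simp
    have hsr : s ^ r = α ^ θ₁ := by
      rw [hsdef, ← Real.rpow_mul hα.le, hθr]
    have hsr1 : s ^ (r - 1) = α ^ (θ₁ - θ) := by
      rw [hsdef, ← Real.rpow_mul hα.le, hθr1]
    -- r * s^(r-1) ≥ 1
    have hrs : 1 ≤ r * s ^ (r - 1) := by
      rw [hsr1, hrdef]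
      have h := (div_lt_iff₀ hθ₁).mp hhyp
      rw [div_mul_eq_mul_div, le_div_iff₀ hθ]
      nlinarith
    -- Bernoulli: (c + s)^r ≥ c + s^r
    have hbern : c + s ^ r ≤ (c + s) ^ r := by
      have ht : (0 : ℝ) ≤ c / s := div_nonneg hc hs.le
      have hB := one_add_mul_self_le_rpow_one_add (by linarith : (-1 : ℝ) ≤ c / s) hr1
      have heq : (c + s) ^ r = s ^ r * (1 + c / s) ^ r := by
        rw [← Real.mul_rpow hs.le (by linarith)]
        congr 1
        field_simp
        ring
      have hsplit : s ^ r = s ^ (r - 1) * s := by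
        rw [← Real.rpow_add_one hs.ne']
        ring_nf
      have h2 : s ^ r * (1 + r * (c / s)) ≤ s ^ r * (1 + c / s) ^ r :=
        mul_le_mul_of_nonneg_left hB (Real.rpow_nonneg hs.le r)
      have h3 : s ^ r * (r * (c / s)) = r * s ^ (r - 1) * c := by
        rw [hsplit]
        field_simp
      have h4 : c ≤ r * s ^ (r - 1) * c := by
        nlinarith
      nlinarith [h2, h3]
    -- conclude rpow comparison
    have hmain : (c + α ^ θ₁) ^ (1 / θ₁) ≤ (c + α ^ θ) ^ (1 / θ) := by
      have h5 : (c + α ^ θ₁) ^ (1 / θ₁) ≤ ((c + s) ^ r) ^ (1 / θ₁) := by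
        apply Real.rpow_le_rpow (by positivity) _ (by positivity)
        rw [← hsr]; exact hbern
      have h6 : ((c + s) ^ r) ^ (1 / θ₁) = (c + s) ^ (1 / θ) := by
        rw [← Real.rpow_mul (by positivity)]
        congr 1
        rw [hrdef]
        field_simp
      rw [h6] at h5
      exact h5
    have hpos : 0 < (c + α ^ θ₁) ^ (1 / θ₁) + 1 - α :=
      lt_of_lt_of_le one_pos (ELL_denom_ge_one hα.le hθ₁ hc)
    exact one_div_le_one_div_of_le hpos (by linarith)
end

section
/- Let α, β, θ > 0 and α₁, β₁, θ₁ > 0 satisfy: (HR1) βθα^{θ−1} ≤ β₁θ₁α₁^{θ₁−1} and βθα^θ ≤ β₁θ₁α₁^{θ₁}; (HR2) θ < θ₁; (HR3) (1 − α₁)(θ₁ − 1) ≥ 0; (HR4) (1/α − 1)(θ − 1) ≤ (1/α₁ − 1)(θ₁ − 1). Then for every x ≥ 0, h_{α,β,θ}(x) ≥ h_{α₁,β₁,θ₁}(x); that is, K_{α,β,θ} ≤_hr K_{α₁,β₁,θ₁}. -/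
open Real

set_option maxHeartbeats 2000000

/-- Under conditions (HR1)–(HR4), the enlarged log-logistic
distributions satisfy `K_{α,β,θ} ≤_hr K_{α₁,β₁,θ₁}`: the hazard rate
`h_{α,β,θ}(x) = (x/β + α^θ)^{1/θ-1}/(βθ((x/β + α^θ)^{1/θ} + 1 - α))`
dominates `h_{α₁,β₁,θ₁}(x)` pointwise on `[0,∞)`. -/
theorem ELL_hr_order
    (α β θ α₁ β₁ θ₁ : ℝ)
    (hα : 0 < α) (hβ : 0 < β) (hθ : 0 < θ)
    (hα₁ : 0 < α₁) (hβ₁ : 0 < β₁) (hθ₁ : 0 < θ₁)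
    (hHR1a : β * θ * α ^ (θ - 1) ≤ β₁ * θ₁ * α₁ ^ (θ₁ - 1))
    (hHR1b : β * θ * α ^ θ ≤ β₁ * θ₁ * α₁ ^ θ₁)
    (hHR2 : θ < θ₁)
    (hHR3 : 0 ≤ (1 - α₁) * (θ₁ - 1))
    (hHR4 : (1 / α - 1) * (θ - 1) ≤ (1 / α₁ - 1) * (θ₁ - 1)) :
    ∀ x ≥ (0 : ℝ),
      (x / β₁ + α₁ ^ θ₁) ^ (1 / θ₁ - 1) /
          (β₁ * θ₁ * ((x / β₁ + α₁ ^ θ₁) ^ (1 / θ₁) + 1 - α₁)) ≤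
        (x / β + α ^ θ) ^ (1 / θ - 1) /
          (β * θ * ((x / β + α ^ θ) ^ (1 / θ) + 1 - α)) := by
  have ha : (0:ℝ) < α ^ θ := rpow_pos_of_pos hα θ
  have ha₁ : (0:ℝ) < α₁ ^ θ₁ := rpow_pos_of_pos hα₁ θ₁
  -- KEY: α * s ≤ α₁ * t
  have key : ∀ y : ℝ, 0 ≤ y →
      α * (y / β₁ + α₁ ^ θ₁) ^ (1 / θ₁) ≤ α₁ * (y / β + α ^ θ) ^ (1 / θ) := by
    intro y hy
    have hu : 0 < y / β + α ^ θ := by positivity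
    have hu₁ : 0 < y / β₁ + α₁ ^ θ₁ := by positivity
    rw [← Real.rpow_le_rpow_iff (by positivity) (by positivity) hθ₁,
        Real.mul_rpow hα.le (rpow_nonneg hu₁.le _),
        Real.mul_rpow hα₁.le (rpow_nonneg hu.le _),
        ← Real.rpow_mul hu₁.le, ← Real.rpow_mul hu.le, one_div,
        inv_mul_cancel₀ hθ₁.ne', Real.rpow_one]
    set z : ℝ := y / (β * α ^ θ) with hz
    have hz0 : 0 ≤ z := by positivity
    have hw : y / β + α ^ θ = α ^ θ * (1 + z) := by rw [hz]; field_simp; ring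
    have hq1 : (1:ℝ) ≤ 1/θ*θ₁ := by
      rw [div_mul_eq_mul_div, one_mul, le_div_iff₀ hθ]; linarith
    have hbern : 1 + (1/θ*θ₁) * z ≤ (1+z) ^ (1/θ*θ₁) :=
      one_add_mul_self_le_rpow_one_add (by linarith) hq1
    have hpow : (y / β + α ^ θ) ^ (1/θ*θ₁) = α ^ θ₁ * (1+z) ^ (1/θ*θ₁) := by
      rw [hw, Real.mul_rpow ha.le (by linarith), ← Real.rpow_mul hα.le]
      congr 2
      field_simp
    rw [hpow]
    have hlin : α ^ θ₁ * (y/β₁ + α₁^θ₁) ≤ α₁^θ₁ * (α^θ₁ * (1 + (1/θ*θ₁)*z)) := by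
      rw [hz]
      have h1 : α₁^θ₁ * (α^θ₁ * (1 + (1/θ*θ₁)*(y/(β*α^θ))))
          = α₁^θ₁*α^θ₁ + α^θ₁ * (α₁^θ₁*θ₁*y/(θ*(β*α^θ))) := by
        field_simp
      rw [h1]
      have h2 : y/β₁ ≤ α₁^θ₁*θ₁*y/(θ*(β*α^θ)) := by
        rw [div_le_div_iff₀ hβ₁ (by positivity)]
        nlinarith
      nlinarith [ha.le, rpow_nonneg hα.le θ₁]
    calc α ^ θ₁ * (y/β₁ + α₁^θ₁) ≤ α₁^θ₁ * (α^θ₁ * (1 + (1/θ*θ₁)*z)) := hlin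
      _ ≤ α₁^θ₁ * (α^θ₁ * (1+z) ^ (1/θ*θ₁)) := by
          apply mul_le_mul_of_nonneg_left _ ha₁.le
          exact mul_le_mul_of_nonneg_left hbern (rpow_pos_of_pos hα θ₁).le
  -- the auxiliary function G and its derivative D
  obtain ⟨G, hGdef⟩ : ∃ G : ℝ → ℝ, G = fun y =>
      β₁*θ₁*(y/β₁ + α₁^θ₁) + β₁*θ₁*(1-α₁)*(y/β₁ + α₁^θ₁)^((1:ℝ)-1/θ₁)
        - (β*θ*(y/β + α^θ) + β*θ*(1-α)*(y/β + α^θ)^((1:ℝ)-1/θ)) := ⟨_, rfl⟩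
  obtain ⟨D, hDdef⟩ : ∃ D : ℝ → ℝ, D = fun y =>
      (θ₁ - θ) + (1-α₁)*(θ₁-1)*(y/β₁ + α₁^θ₁)^(-(1/θ₁))
        - (1-α)*(θ-1)*(y/β + α^θ)^(-(1/θ)) := ⟨_, rfl⟩
  have hHD : ∀ y : ℝ, 0 ≤ y → HasDerivAt G (D y) y := by
    intro y hy
    have hu : 0 < y / β + α ^ θ := by positivity
    have hu₁ : 0 < y / β₁ + α₁ ^ θ₁ := by positivity
    have d1 : HasDerivAt (fun w : ℝ => w/β₁ + α₁^θ₁) (1/β₁) y := by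
      simpa using ((hasDerivAt_id y).div_const β₁).add_const (α₁^θ₁)
    have d1' : HasDerivAt (fun w : ℝ => w/β + α^θ) (1/β) y := by
      simpa using ((hasDerivAt_id y).div_const β).add_const (α^θ)
    have d3 := (d1.rpow_const (p := 1-1/θ₁) (Or.inl hu₁.ne')).const_mul (β₁*θ₁*(1-α₁))
    have d3' := (d1'.rpow_const (p := 1-1/θ) (Or.inl hu.ne')).const_mul (β*θ*(1-α))
    have d2 := d1.const_mul (β₁*θ₁)
    have d2' := d1'.const_mul (β*θ)
    have hder := (d2.add d3).sub (d2'.add d3')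
    rw [hGdef, hDdef]
    refine hder.congr_deriv ?_
    beta_reduce
    have e1 : (1:ℝ)-1/θ₁-1 = -(1/θ₁) := by ring
    have e1' : (1:ℝ)-1/θ-1 = -(1/θ) := by ring
    rw [e1, e1']
    field_simp
    ring
  have hDpos : ∀ y : ℝ, 0 ≤ y → 0 ≤ D y := by
    intro y hy
    have hu : 0 < y / β + α ^ θ := by positivity
    have hu₁ : 0 < y / β₁ + α₁ ^ θ₁ := by positivity
    have ht : 0 < (y/β + α^θ)^(1/θ) := rpow_pos_of_pos hu _
    have hs : 0 < (y/β₁ + α₁^θ₁)^(1/θ₁) := rpow_pos_of_pos hu₁ _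
    rw [hDdef]
    simp only
    rw [Real.rpow_neg hu.le, Real.rpow_neg hu₁.le]
    set t := (y/β + α^θ)^(1/θ)
    set s := (y/β₁ + α₁^θ₁)^(1/θ₁)
    have hts : α * s ≤ α₁ * t := key y hy
    rcases le_or_gt ((1-α)*(θ-1)) 0 with hA | hA
    · have h1 : (1-α)*(θ-1) * t⁻¹ ≤ 0 :=
        mul_nonpos_of_nonpos_of_nonneg hA (by positivity)
      have h2 : 0 ≤ (1-α₁)*(θ₁-1) * s⁻¹ := by positivity
      linarith
    · -- A > 0 case
      have hAA : (1-α)*(θ-1) * α₁ ≤ (1-α₁)*(θ₁-1) * α := by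
        have e : (1/α - 1)*(θ-1) = (1-α)*(θ-1)/α := by field_simp; try ring
        have e₁ : (1/α₁ - 1)*(θ₁-1) = (1-α₁)*(θ₁-1)/α₁ := by field_simp; try ring
        rw [e, e₁, div_le_div_iff₀ hα hα₁] at hHR4
        linarith
      have hst : (1-α)*(θ-1) * s ≤ (1-α₁)*(θ₁-1) * t := by
        nlinarith [mul_le_mul_of_nonneg_left hts hA.le,
          mul_le_mul_of_nonneg_right hAA ht.le]
      have h3 : (1-α)*(θ-1) / t ≤ (1-α₁)*(θ₁-1) / s := by
        rw [div_le_div_iff₀ ht hs]; exact hst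
      rw [div_eq_mul_inv, div_eq_mul_inv] at h3
      linarith
  -- G 0 ≥ 0
  have hG0 : 0 ≤ G 0 := by
    simp only [hGdef, zero_div, zero_add]
    have e : (α^θ)^((1:ℝ)-1/θ) = α^(θ-1) := by
      rw [← Real.rpow_mul hα.le]
      congr 1
      field_simp
    have e₁ : (α₁^θ₁)^((1:ℝ)-1/θ₁) = α₁^(θ₁-1) := by
      rw [← Real.rpow_mul hα₁.le]
      congr 1
      field_simp
    have f : α^θ = α^(θ-1) * α := by
      rw [← Real.rpow_add_one hα.ne' (θ-1)]
      norm_num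
    have f₁ : α₁^θ₁ = α₁^(θ₁-1) * α₁ := by
      rw [← Real.rpow_add_one hα₁.ne' (θ₁-1)]
      norm_num
    rw [e, e₁, f, f₁]
    have expand : β₁*θ₁*(α₁^(θ₁-1)*α₁) + β₁*θ₁*(1-α₁)*α₁^(θ₁-1)
        - (β*θ*(α^(θ-1)*α) + β*θ*(1-α)*α^(θ-1))
        = β₁*θ₁*α₁^(θ₁-1) - β*θ*α^(θ-1) := by ring
    linarith [expand, hHR1a]
  -- monotonicity of G on [0,∞)
  have hmono : MonotoneOn G (Set.Ici (0:ℝ)) := by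
    apply monotoneOn_of_deriv_nonneg (convex_Ici 0)
    · intro y hy
      exact (hHD y hy).continuousAt.continuousWithinAt
    · rw [interior_Ici]
      intro y hy
      exact (hHD y (le_of_lt hy)).differentiableAt.differentiableWithinAt
    · rw [interior_Ici]
      intro y hy
      rw [(hHD y hy.le).deriv]
      exact hDpos y hy.le
  -- conclusion
  intro x hx
  have hGx : 0 ≤ G x := le_trans hG0 (hmono Set.self_mem_Ici hx hx)
  have hu : 0 < x / β + α ^ θ := by positivity
  have hu₁ : 0 < x / β₁ + α₁ ^ θ₁ := by positivity
  have ht : 0 < (x/β + α^θ)^(1/θ) := rpow_pos_of_pos hu _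
  have hs : 0 < (x/β₁ + α₁^θ₁)^(1/θ₁) := rpow_pos_of_pos hu₁ _
  have htα : α ≤ (x/β + α^θ)^(1/θ) := by
    have : α = (α^θ)^(1/θ) := by
      rw [← Real.rpow_mul hα.le, mul_one_div, div_self hθ.ne', Real.rpow_one]
    nth_rewrite 1 [this]
    exact Real.rpow_le_rpow ha.le (by linarith [div_nonneg hx hβ.le]) (by positivity)
  have hsα : α₁ ≤ (x/β₁ + α₁^θ₁)^(1/θ₁) := by
    have : α₁ = (α₁^θ₁)^(1/θ₁) := by
      rw [← Real.rpow_mul hα₁.le, mul_one_div, div_self hθ₁.ne', Real.rpow_one]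
    nth_rewrite 1 [this]
    exact Real.rpow_le_rpow ha₁.le (by linarith [div_nonneg hx hβ₁.le]) (by positivity)
  have hden : 0 < β * θ * ((x/β + α^θ)^(1/θ) + 1 - α) := by
    apply mul_pos (mul_pos hβ hθ); linarith
  have hden₁ : 0 < β₁ * θ₁ * ((x/β₁ + α₁^θ₁)^(1/θ₁) + 1 - α₁) := by
    apply mul_pos (mul_pos hβ₁ hθ₁); linarith
  rw [div_le_div_iff₀ hden₁ hden]
  -- key decomposition identities
  have r1 : (x/β + α^θ)^((1:ℝ)-1/θ) * (x/β + α^θ)^((1:ℝ)/θ-1) = 1 := by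
    rw [← Real.rpow_add hu]
    norm_num
  have r2 : (x/β + α^θ) * (x/β + α^θ)^((1:ℝ)/θ-1) = (x/β + α^θ)^((1:ℝ)/θ) := by
    nth_rewrite 1 [← Real.rpow_one (x/β + α^θ)]
    rw [← Real.rpow_add hu]
    norm_num
  have r1' : (x/β₁ + α₁^θ₁)^((1:ℝ)-1/θ₁) * (x/β₁ + α₁^θ₁)^((1:ℝ)/θ₁-1) = 1 := by
    rw [← Real.rpow_add hu₁]
    norm_num
  have r2' : (x/β₁ + α₁^θ₁) * (x/β₁ + α₁^θ₁)^((1:ℝ)/θ₁-1) = (x/β₁ + α₁^θ₁)^((1:ℝ)/θ₁) := by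
    nth_rewrite 1 [← Real.rpow_one (x/β₁ + α₁^θ₁)]
    rw [← Real.rpow_add hu₁]
    norm_num
  have ed : β*θ*((x/β + α^θ)^((1:ℝ)/θ) + 1 - α)
      = (β*θ*(x/β + α^θ) + β*θ*(1-α)*(x/β + α^θ)^((1:ℝ)-1/θ)) * (x/β + α^θ)^((1:ℝ)/θ-1) := by
    linear_combination (-(β*θ)) * r2 - (β*θ*(1-α)) * r1
  have ed₁ : β₁*θ₁*((x/β₁ + α₁^θ₁)^((1:ℝ)/θ₁) + 1 - α₁)
      = (β₁*θ₁*(x/β₁ + α₁^θ₁) + β₁*θ₁*(1-α₁)*(x/β₁ + α₁^θ₁)^((1:ℝ)-1/θ₁)) * (x/β₁ + α₁^θ₁)^((1:ℝ)/θ₁-1) := by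
    linear_combination (-(β₁*θ₁)) * r2' - (β₁*θ₁*(1-α₁)) * r1'
  have hXY : β*θ*(x/β + α^θ) + β*θ*(1-α)*(x/β + α^θ)^((1:ℝ)-1/θ)
      ≤ β₁*θ₁*(x/β₁ + α₁^θ₁) + β₁*θ₁*(1-α₁)*(x/β₁ + α₁^θ₁)^((1:ℝ)-1/θ₁) := by
    simp only [hGdef] at hGx
    linarith
  calc (x/β₁ + α₁^θ₁)^((1:ℝ)/θ₁-1) * (β*θ*((x/β + α^θ)^((1:ℝ)/θ) + 1 - α))
      = (β*θ*(x/β + α^θ) + β*θ*(1-α)*(x/β + α^θ)^((1:ℝ)-1/θ))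
          * ((x/β + α^θ)^((1:ℝ)/θ-1) * (x/β₁ + α₁^θ₁)^((1:ℝ)/θ₁-1)) := by
        rw [ed]; ring
    _ ≤ (β₁*θ₁*(x/β₁ + α₁^θ₁) + β₁*θ₁*(1-α₁)*(x/β₁ + α₁^θ₁)^((1:ℝ)-1/θ₁))
          * ((x/β + α^θ)^((1:ℝ)/θ-1) * (x/β₁ + α₁^θ₁)^((1:ℝ)/θ₁-1)) := by
        apply mul_le_mul_of_nonneg_right hXY
        positivity
    _ = (x/β + α^θ)^((1:ℝ)/θ-1) * (β₁*θ₁*((x/β₁ + α₁^θ₁)^((1:ℝ)/θ₁) + 1 - α₁)) := by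
        rw [ed₁]; ring
end

section
/- Let α, α₁ ≥ 0 and β, β₁, θ, θ₁ > 0, and define ψ(x) = β₁(((x/β + α^θ)^{1/θ} + α₁ − α)^{θ₁} − α₁^{θ₁}) for x ≥ 0, which equals K_{α₁,β₁,θ₁}^{-1} ∘ K_{α,β,θ}(x). If θ ≤ θ₁ and α(θ₁ − 1) + α₁(1 − θ) ≥ 0, then ψ is convex on [0,∞), i.e. K_{α,β,θ} ≤_c K_{α₁,β₁,θ₁}. If θ ≥ θ₁ and α(θ₁ − 1) + α₁(1 − θ) ≤ 0, then ψ is concave on [0,∞), i.e. K_{α₁,β₁,θ₁} ≤_c K_{α,β,θ}. -/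
open Real

/-- Convex transform order within the enlarged log-logistic
family.  With `ψ = K_{α₁,β₁,θ₁}⁻¹ ∘ K_{α,β,θ}`, i.e.
`ψ(x) = β₁(((x/β + α^θ)^{1/θ} + α₁ - α)^{θ₁} - α₁^{θ₁})`: if `θ ≤ θ₁` and
`α(θ₁-1) + α₁(1-θ) ≥ 0` then `ψ` is convex on `[0,∞)`
(`K_{α,β,θ} ≤_c K_{α₁,β₁,θ₁}`); if `θ ≥ θ₁` and `α(θ₁-1) + α₁(1-θ) ≤ 0`
then `ψ` is concave on `[0,∞)` (`K_{α₁,β₁,θ₁} ≤_c K_{α,β,θ}`). -/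
theorem ELL_convex_transform_order
    (α α₁ : ℝ) (hα : 0 ≤ α) (hα₁ : 0 ≤ α₁)
    (β β₁ θ θ₁ : ℝ) (hβ : 0 < β) (hβ₁ : 0 < β₁) (hθ : 0 < θ) (hθ₁ : 0 < θ₁) :
    (θ ≤ θ₁ → 0 ≤ α * (θ₁ - 1) + α₁ * (1 - θ) →
      ConvexOn ℝ (Set.Ici 0) (fun x : ℝ =>
        β₁ * (((x / β + α ^ θ) ^ (1 / θ) + α₁ - α) ^ θ₁ - α₁ ^ θ₁))) ∧
    (θ₁ ≤ θ → α * (θ₁ - 1) + α₁ * (1 - θ) ≤ 0 →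
      ConcaveOn ℝ (Set.Ici 0) (fun x : ℝ =>
        β₁ * (((x / β + α ^ θ) ^ (1 / θ) + α₁ - α) ^ θ₁ - α₁ ^ θ₁))) := by
  set ψ : ℝ → ℝ := fun x => β₁ * (((x / β + α ^ θ) ^ (1 / θ) + α₁ - α) ^ θ₁ - α₁ ^ θ₁) with hψ
  set y : ℝ → ℝ := fun x => x / β + α ^ θ with hy
  set t : ℝ → ℝ := fun x => (y x) ^ (1 / θ) with ht
  set s : ℝ → ℝ := fun x => t x + α₁ - α with hs
  set D : ℝ → ℝ := fun x => β₁ * θ₁ * (1 / θ) * (1 / β) * ((s x) ^ (θ₁ - 1) * (y x) ^ (1 / θ - 1))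
    with hD
  set E : ℝ → ℝ := fun x => β₁ * θ₁ * (1 / (θ * θ)) * (1 / (β * β)) * (s x) ^ (θ₁ - 2) *
    (y x) ^ (1 / θ - 2) * ((θ₁ - θ) * t x + (1 - θ) * (α₁ - α)) with hE
  -- positivity facts on the open half line
  have hyp : ∀ x : ℝ, 0 < x → 0 < y x := fun x hx =>
    add_pos_of_pos_of_nonneg (div_pos hx hβ) (rpow_nonneg hα θ)
  have hαθ : (α ^ θ) ^ (1 / θ) = α := by
    rw [← Real.rpow_mul hα, mul_one_div, div_self hθ.ne', Real.rpow_one]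
  have htp : ∀ x : ℝ, 0 < x → α < t x := by
    intro x hx
    have h1 : α ^ θ < y x := by
      have : 0 < x / β := div_pos hx hβ
      simp only [hy]; linarith
    have := Real.rpow_lt_rpow (rpow_nonneg hα θ) h1 (by positivity : 0 < 1 / θ)
    rwa [hαθ] at this
  have hsp : ∀ x : ℝ, 0 < x → 0 < s x := by
    intro x hx
    have := htp x hx
    simp only [hs]; linarith
  -- derivative of inner affine map
  have hyd : ∀ x : ℝ, HasDerivAt y (1 / β) x := by
    intro x
    exact ((hasDerivAt_id x).div_const β).add_const (α ^ θ)
  have htd : ∀ x : ℝ, 0 < x →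
      HasDerivAt t (1 / β * (1 / θ) * (y x) ^ (1 / θ - 1)) x := by
    intro x hx
    exact (hyd x).rpow_const (Or.inl (hyp x hx).ne')
  have hsd : ∀ x : ℝ, 0 < x →
      HasDerivAt s (1 / β * (1 / θ) * (y x) ^ (1 / θ - 1)) x := by
    intro x hx
    exact ((htd x hx).add_const α₁).sub_const α
  -- first derivative of ψ
  have hDder : ∀ x : ℝ, 0 < x → HasDerivAt ψ (D x) x := by
    intro x hx
    have h1 : HasDerivAt (fun z => (s z) ^ θ₁)
        (1 / β * (1 / θ) * (y x) ^ (1 / θ - 1) * θ₁ * (s x) ^ (θ₁ - 1)) x :=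
      (hsd x hx).rpow_const (Or.inl (hsp x hx).ne')
    have h2 := (h1.sub_const (α₁ ^ θ₁)).const_mul β₁
    refine h2.congr_deriv ?_
    simp only [hD]; ring
  -- second derivative of ψ
  have hEder : ∀ x : ℝ, 0 < x → HasDerivAt D (E x) x := by
    intro x hx
    have hyx := hyp x hx
    have hsx := hsp x hx
    have h1 : HasDerivAt (fun z => (s z) ^ (θ₁ - 1))
        (1 / β * (1 / θ) * (y x) ^ (1 / θ - 1) * (θ₁ - 1) * (s x) ^ (θ₁ - 1 - 1)) x :=
      (hsd x hx).rpow_const (Or.inl hsx.ne')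
    have h2 : HasDerivAt (fun z => (y z) ^ (1 / θ - 1))
        (1 / β * (1 / θ - 1) * (y x) ^ (1 / θ - 1 - 1)) x :=
      (hyd x).rpow_const (Or.inl hyx.ne')
    have h3 := ((h1.mul h2).const_mul (β₁ * θ₁ * (1 / θ) * (1 / β)))
    refine h3.congr_deriv (Eq.symm ?_)
    have hA : (y x) ^ (1 / θ - 1) * (y x) ^ (1 / θ - 1)
        = (y x) ^ (1 / θ - 2) * (y x) ^ (1 / θ) := by
      rw [← Real.rpow_add hyx, ← Real.rpow_add hyx]; ring_nf
    have hB : (s x) ^ (θ₁ - 1) = (s x) ^ (θ₁ - 2) * (s x) := by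
      rw [← Real.rpow_add_one hsx.ne' (θ₁ - 2)]; ring_nf
    have hC : (θ₁ - 1 - 1) = (θ₁ - 2) := by ring
    have hC' : (1 / θ - 1 - 1) = (1 / θ - 2) := by ring
    rw [hE, hC, hC', hB]
    simp only [hs, ht]
    have hinv : θ * θ⁻¹ = 1 := mul_inv_cancel₀ hθ.ne'
    linear_combination (-(β₁ * θ₁) * (1 / θ) * (1 / β) * (1 / β) * (1 / θ) * (θ₁ - 1) *
      (y x ^ (1 / θ) + α₁ - α) ^ (θ₁ - 2)) * hA +
      (-(β₁ * θ₁) * (1 / (β * β)) * (1 / θ) * (y x ^ (1 / θ) + α₁ - α) ^ (θ₁ - 2) *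
        y x ^ (1 / θ - 2) * (y x ^ (1 / θ) + α₁ - α)) * hinv
  -- continuity on the closed half line
  have hcont : ContinuousOn ψ (Set.Ici 0) := by
    have c1 : ContinuousOn y (Set.Ici 0) :=
      ((continuous_id.div_const β).add continuous_const).continuousOn
    have c2 : ContinuousOn t (Set.Ici 0) :=
      c1.rpow_const (fun x _ => Or.inr (by positivity))
    have c3 : ContinuousOn s (Set.Ici 0) := (c2.add continuousOn_const).sub continuousOn_const
    exact continuousOn_const.mul
      ((c3.rpow_const (fun x _ => Or.inr hθ₁.le)).sub continuousOn_const)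
  have hdiff : DifferentiableOn ℝ ψ (interior (Set.Ici (0:ℝ))) := by
    rw [interior_Ici]
    exact fun x hx => ((hDder x hx).differentiableAt).differentiableWithinAt
  -- deriv ψ agrees with D on the interior
  have hderiv_eq : ∀ x : ℝ, 0 < x → deriv ψ x = D x := fun x hx => (hDder x hx).deriv
  have hev : ∀ x : ℝ, 0 < x → deriv ψ =ᶠ[nhds x] D := by
    intro x hx
    filter_upwards [isOpen_Ioi.mem_nhds (show x ∈ Set.Ioi (0:ℝ) from hx)] with z hz
    exact hderiv_eq z hz
  have hdiff2 : DifferentiableOn ℝ (deriv ψ) (interior (Set.Ici (0:ℝ))) := by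
    rw [interior_Ici]
    intro x hx
    have : DifferentiableAt ℝ D x := (hEder x hx).differentiableAt
    exact (this.congr_of_eventuallyEq (hev x hx)).differentiableWithinAt
  have hderiv2_eq : ∀ x : ℝ, 0 < x → deriv^[2] ψ x = E x := by
    intro x hx
    have h1 : deriv (deriv ψ) x = deriv D x := (hev x hx).deriv_eq
    have h2 : deriv D x = E x := (hEder x hx).deriv
    simp only [Function.iterate_succ, Function.iterate_zero, Function.comp_apply, id]
    rw [h1, h2]
  constructor
  · intro h1 h2
    refine convexOn_of_deriv2_nonneg (convex_Ici 0) hcont hdiff hdiff2 ?_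
    intro x hx
    rw [interior_Ici] at hx
    rw [hderiv2_eq x hx]
    have hP : 0 ≤ (θ₁ - θ) * t x + (1 - θ) * (α₁ - α) := by
      nlinarith [mul_nonneg (sub_nonneg.2 h1) (sub_nonneg.2 (htp x hx).le)]
    have hK : 0 ≤ β₁ * θ₁ * (1 / (θ * θ)) * (1 / (β * β)) * (s x) ^ (θ₁ - 2) *
        (y x) ^ (1 / θ - 2) := by
      have := (hsp x hx).le
      have := (hyp x hx).le
      positivity
    exact mul_nonneg hK hP
  · intro h1 h2
    refine concaveOn_of_deriv2_nonpos (convex_Ici 0) hcont hdiff hdiff2 ?_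
    intro x hx
    rw [interior_Ici] at hx
    rw [hderiv2_eq x hx]
    have hP : (θ₁ - θ) * t x + (1 - θ) * (α₁ - α) ≤ 0 := by
      nlinarith [mul_nonneg (sub_nonneg.2 h1) (sub_nonneg.2 (htp x hx).le)]
    have hK : 0 ≤ β₁ * θ₁ * (1 / (θ * θ)) * (1 / (β * β)) * (s x) ^ (θ₁ - 2) *
        (y x) ^ (1 / θ - 2) := by
      have := (hsp x hx).le
      have := (hyp x hx).le
      positivity
    exact mul_nonpos_of_nonneg_of_nonpos hK hP
end

section
/- Let F be a baseline distribution function on [0,∞) with 0 ≤ F < 1 whose odds function Λ_F(x) = F(x)/(1 − F(x)) is nonnegative, and let α, α₁ ≥ 0 and β, β₁, θ, θ₁ > 0. Define ψ(x) = β₁((β((α + Λ_F(x))^θ − α^θ) + α₁)^{θ₁} − α₁^{θ₁}) = K_{α₁,β₁,θ₁}^{-1} ∘ G_{α,β,θ}(x). If Λ_F is convex on [0,∞) (F ∈ IOR) and θ, θ₁ ≥ 1, then ψ is convex on [0,∞), i.e. G_{α,β,θ} ≤_c K_{α₁,β₁,θ₁}. If Λ_F is concave on [0,∞) (F ∈ DOR)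 and θ, θ₁ ≤ 1, then ψ is concave on [0,∞), i.e. K_{α₁,β₁,θ₁} ≤_c G_{α,β,θ}. -/
open Real

private lemma myCompCvx {s t : Set ℝ} {f g : ℝ → ℝ} (hg : ConvexOn ℝ t g)
    (hg' : MonotoneOn g t) (hf : ConvexOn ℝ s f) (hst : ∀ x ∈ s, f x ∈ t) :
    ConvexOn ℝ s (fun x => g (f x)) :=
  ⟨hf.1, fun x hx y hy a b ha hb hab =>
    (hg' (hst _ (hf.1 hx hy ha hb hab)) (hg.1 (hst _ hx) (hst _ hy) ha hb hab)
      (hf.2 hx hy ha hb hab)).trans (hg.2 (hst _ hx) (hst _ hy) ha hb hab)⟩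

private lemma myCompCcv {s t : Set ℝ} {f g : ℝ → ℝ} (hg : ConcaveOn ℝ t g)
    (hg' : MonotoneOn g t) (hf : ConcaveOn ℝ s f) (hst : ∀ x ∈ s, f x ∈ t) :
    ConcaveOn ℝ s (fun x => g (f x)) :=
  ⟨hf.1, fun x hx y hy a b ha hb hab =>
    (hg.2 (hst _ hx) (hst _ hy) ha hb hab).trans
      (hg' (hg.1 (hst _ hx) (hst _ hy) ha hb hab) (hst _ (hf.1 hx hy ha hb hab))
        (hf.2 hx hy ha hb hab))⟩

private lemma affineAdd (α : ℝ) : ConvexOn ℝ (Set.Ici (0:ℝ)) (fun t => α + t) ∧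
    ConcaveOn ℝ (Set.Ici (0:ℝ)) (fun t => α + t) :=
  ⟨⟨convex_Ici 0, fun x _ y _ a b _ _ hab => by
      simp only [smul_eq_mul]
      have h : (a + b) * α = α := by rw [hab, one_mul]
      linarith [mul_add a α x, mul_add b α y, add_mul a b α, h]⟩,
   ⟨convex_Ici 0, fun x _ y _ a b _ _ hab => by
      simp only [smul_eq_mul]
      have h : (a + b) * α = α := by rw [hab, one_mul]
      linarith [mul_add a α x, mul_add b α y, add_mul a b α, h]⟩⟩

/-- Convex transform order between the d-oMO distribution and
the enlarged log-logistic family.  With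
`ψ(x) = β₁((β((α + Λ_F(x))^θ - α^θ) + α₁)^{θ₁} - α₁^{θ₁})
      = K_{α₁,β₁,θ₁}⁻¹ ∘ G_{α,β,θ}(x)`:
if `Λ_F` is convex on `[0,∞)` (`F ∈ IOR`) and `θ, θ₁ ≥ 1`, then `ψ` is convex
on `[0,∞)` (`G_{α,β,θ} ≤_c K_{α₁,β₁,θ₁}`); if `Λ_F` is concave on `[0,∞)`
(`F ∈ DOR`) and `θ, θ₁ ≤ 1`, then `ψ` is concave on `[0,∞)`
(`K_{α₁,β₁,θ₁} ≤_c G_{α,β,θ}`). -/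
theorem doMO_ELL_convex_transform_order
    (F Λ : ℝ → ℝ)
    (hrange : ∀ x ∈ Set.Ici (0 : ℝ), 0 ≤ F x ∧ F x < 1)
    (hΛdef : ∀ x ∈ Set.Ici (0 : ℝ), Λ x = F x / (1 - F x))
    (α α₁ : ℝ) (hα : 0 ≤ α) (hα₁ : 0 ≤ α₁)
    (β β₁ θ θ₁ : ℝ) (hβ : 0 < β) (hβ₁ : 0 < β₁) (hθ : 0 < θ) (hθ₁ : 0 < θ₁) :
    (ConvexOn ℝ (Set.Ici 0) Λ → 1 ≤ θ → 1 ≤ θ₁ →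
      ConvexOn ℝ (Set.Ici 0) (fun x =>
        β₁ * ((β * ((α + Λ x) ^ θ - α ^ θ) + α₁) ^ θ₁ - α₁ ^ θ₁))) ∧
    (ConcaveOn ℝ (Set.Ici 0) Λ → θ ≤ 1 → θ₁ ≤ 1 →
      ConcaveOn ℝ (Set.Ici 0) (fun x =>
        β₁ * ((β * ((α + Λ x) ^ θ - α ^ θ) + α₁) ^ θ₁ - α₁ ^ θ₁))) := by
  -- Λ is nonnegative on [0,∞)
  have hΛnn : ∀ x ∈ Set.Ici (0:ℝ), 0 ≤ Λ x := by
    intro x hx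
    rw [hΛdef x hx]
    have h := hrange x hx
    exact div_nonneg h.1 (by linarith [h.2])
  -- monotonicity of rpow on Ici 0
  have hmono : ∀ p : ℝ, 0 < p → MonotoneOn (fun v : ℝ => v ^ p) (Set.Ici 0) :=
    fun p hp x hx y _ hxy => Real.rpow_le_rpow hx hxy hp.le
  -- image facts
  have himg1 : ∀ t ∈ Set.Ici (0:ℝ), α + t ∈ Set.Ici (0:ℝ) :=
    fun t ht => add_nonneg hα ht
  have himg2 : ∀ t ∈ Set.Ici (0:ℝ),
      β * ((α + t) ^ θ - α ^ θ) + α₁ ∈ Set.Ici (0:ℝ) := by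
    intro t ht
    have h1 : α ^ θ ≤ (α + t) ^ θ := Real.rpow_le_rpow hα (by linarith [ht.out]) hθ.le
    have : 0 ≤ β * ((α + t) ^ θ - α ^ θ) := mul_nonneg hβ.le (by linarith)
    simpa using add_nonneg this hα₁
  -- the middle function φ(t) = β*((α+t)^θ - α^θ) + α₁ and the outer
  -- function w(v) = β₁*(v^θ₁ - α₁^θ₁)
  have hφmono : MonotoneOn (fun t : ℝ => β * ((α + t) ^ θ - α ^ θ) + α₁) (Set.Ici 0) := by
    intro x hx y hy hxy
    have h1 : (α + x) ^ θ ≤ (α + y) ^ θ :=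
      Real.rpow_le_rpow (add_nonneg hα hx) (by linarith) hθ.le
    have : β * ((α + x) ^ θ - α ^ θ) ≤ β * ((α + y) ^ θ - α ^ θ) :=
      mul_le_mul_of_nonneg_left (by linarith) hβ.le
    dsimp only; linarith
  have hwmono : MonotoneOn (fun v : ℝ => β₁ * (v ^ θ₁ - α₁ ^ θ₁)) (Set.Ici 0) := by
    intro x hx y hy hxy
    have h1 : x ^ θ₁ ≤ y ^ θ₁ := Real.rpow_le_rpow hx hxy hθ₁.le
    have : β₁ * (x ^ θ₁ - α₁ ^ θ₁) ≤ β₁ * (y ^ θ₁ - α₁ ^ θ₁) :=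
      mul_le_mul_of_nonneg_left (by linarith) hβ₁.le
    exact this
  constructor
  · -- convex case
    intro hΛcvx hθ1 hθ₁1
    -- (α+t)^θ convex on Ici 0
    have h1 : ConvexOn ℝ (Set.Ici 0) (fun t : ℝ => (α + t) ^ θ) :=
      myCompCvx (convexOn_rpow hθ1) (hmono θ hθ) (affineAdd α).1 himg1
    -- φ convex
    have h2 : ConvexOn ℝ (Set.Ici 0)
        (fun t : ℝ => β * ((α + t) ^ θ - α ^ θ) + α₁) := by
      have := ((h1.sub (concaveOn_const (α ^ θ) (convex_Ici 0))).smul hβ.le).add_const α₁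
      simpa [smul_eq_mul, Pi.add_def] using this
    -- w convex on Ici 0
    have h3 : ConvexOn ℝ (Set.Ici 0) (fun v : ℝ => β₁ * (v ^ θ₁ - α₁ ^ θ₁)) := by
      have := ((convexOn_rpow hθ₁1).sub
        (concaveOn_const (α₁ ^ θ₁) (convex_Ici 0))).smul hβ₁.le
      simpa [smul_eq_mul] using this
    -- w ∘ φ convex and monotone
    have hφcvx : ConvexOn ℝ (Set.Ici 0)
        (fun t : ℝ => β₁ * ((β * ((α + t) ^ θ - α ^ θ) + α₁) ^ θ₁ - α₁ ^ θ₁)) :=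
      myCompCvx (g := fun v : ℝ => β₁ * (v ^ θ₁ - α₁ ^ θ₁)) h3 hwmono h2 himg2
    have hφm : MonotoneOn
        (fun t : ℝ => β₁ * ((β * ((α + t) ^ θ - α ^ θ) + α₁) ^ θ₁ - α₁ ^ θ₁))
        (Set.Ici 0) :=
      fun x hx y hy hxy => hwmono (himg2 x hx) (himg2 y hy) (hφmono hx hy hxy)
    exact myCompCvx (g := fun t : ℝ => β₁ * ((β * ((α + t) ^ θ - α ^ θ) + α₁) ^ θ₁ - α₁ ^ θ₁)) hφcvx hφm hΛcvx hΛnn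
  · -- concave case
    intro hΛccv hθ1 hθ₁1
    have h1 : ConcaveOn ℝ (Set.Ici 0) (fun t : ℝ => (α + t) ^ θ) :=
      myCompCcv (Real.concaveOn_rpow hθ.le hθ1) (hmono θ hθ) (affineAdd α).2 himg1
    have h2 : ConcaveOn ℝ (Set.Ici 0)
        (fun t : ℝ => β * ((α + t) ^ θ - α ^ θ) + α₁) := by
      have := ((h1.sub (convexOn_const (α ^ θ) (convex_Ici 0))).smul hβ.le).add_const α₁
      simpa [smul_eq_mul, Pi.add_def] using this
    have h3 : ConcaveOn ℝ (Set.Ici 0) (fun v : ℝ => β₁ * (v ^ θ₁ - α₁ ^ θ₁)) := by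
      have := ((Real.concaveOn_rpow hθ₁.le hθ₁1).sub
        (convexOn_const (α₁ ^ θ₁) (convex_Ici 0))).smul hβ₁.le
      simpa [smul_eq_mul] using this
    have hφccv : ConcaveOn ℝ (Set.Ici 0)
        (fun t : ℝ => β₁ * ((β * ((α + t) ^ θ - α ^ θ) + α₁) ^ θ₁ - α₁ ^ θ₁)) :=
      myCompCcv (g := fun v : ℝ => β₁ * (v ^ θ₁ - α₁ ^ θ₁)) h3 hwmono h2 himg2
    have hφm : MonotoneOn
        (fun t : ℝ => β₁ * ((β * ((α + t) ^ θ - α ^ θ) + α₁) ^ θ₁ - α₁ ^ θ₁))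
        (Set.Ici 0) :=
      fun x hx y hy hxy => hwmono (himg2 x hx) (himg2 y hy) (hφmono hx hy hxy)
    exact myCompCcv (g := fun t : ℝ => β₁ * ((β * ((α + t) ^ θ - α ^ θ) + α₁) ^ θ₁ - α₁ ^ θ₁)) hφccv hφm hΛccv hΛnn
end
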